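/- arXiv:2412.08576 — 9 statements merged into one kernel-verified Lean document; each statement's English description precedes it below -/
import Mathlib

section
/- If a proper cone K in R^d is contracted by a real matrix A (i.e., A maps K minus the origin into the interior of K) and a sequence of matrices A(n) converges to A, then there exists m such that for all n ≥ m, A(n) maps K into K. -/
/-- If a proper cone `K` in `ℝ^d` is contracted by a matrix `A`
(`A` maps `K \ {0}` into the interior of `K`) and a sequence of matrices
`Aseq n` converges to `A`, then eventually `Aseq n` maps `K` into `K`. -/
theorem stmt_0 (d : ℕ) (K : Set (Fin d → ℝ))
    (hadd : ∀ x ∈ K, ∀ y ∈ K, x + y ∈ K)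
    (hsmul : ∀ (c : ℝ), 0 < c → ∀ x ∈ K, c • x ∈ K)
    (hclosed : IsClosed K)
    (hpointed : K ∩ (-K) ⊆ {0})
    (hsolid : (interior K).Nonempty)
    (A : Matrix (Fin d) (Fin d) ℝ)
    (hcontract : ∀ x ∈ K, x ≠ 0 → A.mulVec x ∈ interior K)
    (Aseq : ℕ → Matrix (Fin d) (Fin d) ℝ)
    (hconv : Filter.Tendsto Aseq Filter.atTop (nhds A)) :
    ∃ m : ℕ, ∀ n ≥ m, ∀ x ∈ K, (Aseq n).mulVec x ∈ K := by
  obtain ⟨x0, hx0⟩ := hsolid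
  have hx0K : x0 ∈ K := interior_subset hx0
  have h0K : (0 : Fin d → ℝ) ∈ K := by
    have ht : Filter.Tendsto (fun n : ℕ => (1/(n+1) : ℝ) • x0) Filter.atTop (nhds 0) := by
      have := (tendsto_one_div_add_atTop_nhds_zero_nat (𝕜 := ℝ)).smul_const x0
      simpa using this
    exact hclosed.mem_of_tendsto ht
      (Filter.Eventually.of_forall fun n => hsmul _ (by positivity) _ hx0K)
  set S : Set (Fin d → ℝ) := K ∩ Metric.sphere 0 1 with hS
  have hScomp : IsCompact S := (isCompact_sphere 0 1).inter_left hclosed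
  have hAcont : Continuous A.mulVec := by
    have := A.mulVecLin.continuous_of_finiteDimensional
    simpa [Matrix.coe_mulVecLin] using this
  have hCsub : A.mulVec '' S ⊆ interior K := by
    rintro _ ⟨x, ⟨hxK, hxs⟩, rfl⟩
    refine hcontract x hxK ?_
    intro h
    simp [h] at hxs
  obtain ⟨ε, hε, hthick⟩ :=
    (hScomp.image hAcont).exists_thickening_subset_open isOpen_interior hCsub
  have hentry : ∀ i j : Fin d, ∀ᶠ n in Filter.atTop,
      |Aseq n i j - A i j| < ε / (d + 1) := by
    intro i j
    have h1 : Filter.Tendsto (fun n => Aseq n i j) Filter.atTop (nhds (A i j)) :=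
      tendsto_pi_nhds.mp (tendsto_pi_nhds.mp hconv i) j
    have := Metric.tendsto_nhds.mp h1 (ε / (d + 1)) (by positivity)
    simpa [Real.dist_eq] using this
  have hev : ∀ᶠ n in Filter.atTop, ∀ i j : Fin d, |Aseq n i j - A i j| < ε / (d + 1) := by
    rw [Filter.eventually_all]
    intro i
    rw [Filter.eventually_all]
    exact hentry i
  obtain ⟨m, hm⟩ := Filter.eventually_atTop.mp hev
  refine ⟨m, fun n hn x hxK => ?_⟩
  by_cases hx : x = 0
  · simpa [hx] using h0K
  · have hnx : 0 < ‖x‖ := norm_pos_iff.mpr hx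
    set y : Fin d → ℝ := ‖x‖⁻¹ • x with hy
    have hyK : y ∈ K := hsmul _ (by positivity) _ hxK
    have hyn : ‖y‖ = 1 := by
      rw [hy, norm_smul]
      simp [abs_of_pos (inv_pos.mpr hnx), inv_mul_cancel₀ hnx.ne']
    have hyS : y ∈ S := ⟨hyK, by simpa using hyn⟩
    have hdist : dist ((Aseq n).mulVec y) (A.mulVec y) < ε := by
      rw [dist_pi_lt_iff hε]
      intro i
      have hstep : dist ((Aseq n).mulVec y i) (A.mulVec y i)
          ≤ ∑ j, |Aseq n i j - A i j| * |y j| := by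
        rw [Real.dist_eq]
        have : (Aseq n).mulVec y i - A.mulVec y i
            = ∑ j, (Aseq n i j - A i j) * y j := by
          simp [Matrix.mulVec, dotProduct, ← Finset.sum_sub_distrib, sub_mul]
        rw [this]
        calc |∑ j, (Aseq n i j - A i j) * y j| ≤ ∑ j, |(Aseq n i j - A i j) * y j| :=
              Finset.abs_sum_le_sum_abs _ _
          _ = ∑ j, |Aseq n i j - A i j| * |y j| := by simp [abs_mul]
      have hbound : ∑ j, |Aseq n i j - A i j| * |y j| ≤ d * (ε / (d + 1)) := by
        calc ∑ j, |Aseq n i j - A i j| * |y j|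
            ≤ ∑ j : Fin d, (ε / (d + 1)) * 1 := by
              refine Finset.sum_le_sum fun j _ => ?_
              refine mul_le_mul (le_of_lt (hm n hn i j)) ?_ (abs_nonneg _) (by positivity)
              have := norm_le_pi_norm y j
              simpa [hyn] using this
          _ = d * (ε / (d + 1)) := by simp [mul_comm]
      have hlt : (d : ℝ) * (ε / (d + 1)) < ε := by
        have h1 : (0:ℝ) < (d:ℝ) + 1 := by positivity
        rw [mul_div_assoc', div_lt_iff₀ h1]
        nlinarith [Nat.cast_nonneg (α := ℝ) d]
      exact lt_of_le_of_lt (le_trans hstep hbound) hlt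
    have hyKin : (Aseq n).mulVec y ∈ K := by
      refine interior_subset (hthick ?_)
      rw [Metric.mem_thickening_iff]
      exact ⟨A.mulVec y, Set.mem_image_of_mem _ hyS, hdist⟩
    have hxy : x = ‖x‖ • y := by
      rw [hy, smul_smul, mul_inv_cancel₀ hnx.ne', one_smul]
    have heq : (Aseq n).mulVec x = ‖x‖ • (Aseq n).mulVec y := by
      conv_lhs => rw [hxy]
      rw [Matrix.mulVec_smul]
    rw [heq]
    exact hsmul _ hnx _ hyKin
end

section
/- For s ≥ 2, the Minkowski functional ‖·‖_{P_s} of the regular 2s-gon with vertices at the 2s-th roots of unity is a sub-multiplicative norm on C viewed as a real vector space: ‖yz‖_{P_s} ≤ ‖y‖_{P_s} · ‖z‖_{P_s} for all y, z ∈ C. -/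
open Complex

/-- The regular `2s`-gon with vertices at the `2s`-th roots of unity. -/
noncomputable def regularPolygon (s : ℕ) : Set ℂ :=
  convexHull ℝ {w : ℂ | ∃ i : Fin (2 * s), w = Complex.exp (Real.pi * Complex.I * i / s)}

section Aux

open Set Pointwise

/-- The vertex set of the regular `2s`-gon. -/
def polyVerts (s : ℕ) : Set ℂ :=
  {w : ℂ | ∃ i : Fin (2 * s), w = Complex.exp (Real.pi * Complex.I * i / s)}

lemma regularPolygon_eq (s : ℕ) : regularPolygon s = convexHull ℝ (polyVerts s) := rfl

lemma mem_polyVerts (s : ℕ) (hs : 1 ≤ s) (n : ℕ) :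
    Complex.exp (Real.pi * Complex.I * n / s) ∈ polyVerts s := by
  have h2s : 0 < 2 * s := by omega
  refine ⟨⟨n % (2 * s), Nat.mod_lt _ h2s⟩, ?_⟩
  have hs0 : (s : ℂ) ≠ 0 := by
    exact_mod_cast Nat.cast_ne_zero.2 (by omega : s ≠ 0)
  have hn : (n : ℂ) = (↑(n % (2 * s)) : ℂ) + 2 * s * (↑(n / (2 * s)) : ℂ) := by
    exact_mod_cast (Nat.mod_add_div n (2 * s)).symm
  have key : (Real.pi : ℂ) * Complex.I * n / s
      = Real.pi * Complex.I * (↑(n % (2 * s)) : ℂ) / s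
        + (↑(n / (2 * s)) : ℂ) * (2 * Real.pi * Complex.I) := by
    field_simp
    linear_combination hn
  rw [key, Complex.exp_add, Complex.exp_nat_mul_two_pi_mul_I, mul_one]

lemma polyVerts_mul (s : ℕ) (hs : 1 ≤ s) {x y : ℂ}
    (hx : x ∈ polyVerts s) (hy : y ∈ polyVerts s) : x * y ∈ polyVerts s := by
  obtain ⟨i, rfl⟩ := hx
  obtain ⟨j, rfl⟩ := hy
  have hs0 : (s : ℂ) ≠ 0 := by
    exact_mod_cast Nat.cast_ne_zero.2 (by omega : s ≠ 0)
  rw [← Complex.exp_add]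
  have key : Real.pi * Complex.I * (i : ℂ) / s + Real.pi * Complex.I * (j : ℂ) / s
      = Real.pi * Complex.I * (↑((i : ℕ) + (j : ℕ)) : ℂ) / s := by
    push_cast
    field_simp
  rw [key]
  exact mem_polyVerts s hs _

lemma polyVerts_neg (s : ℕ) (hs : 1 ≤ s) {x : ℂ}
    (hx : x ∈ polyVerts s) : -x ∈ polyVerts s := by
  obtain ⟨i, rfl⟩ := hx
  have hs0 : (s : ℂ) ≠ 0 := by
    exact_mod_cast Nat.cast_ne_zero.2 (by omega : s ≠ 0)
  have key : Real.pi * Complex.I * (↑((i : ℕ) + s) : ℂ) / s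
      = Real.pi * Complex.I * (i : ℂ) / s + Real.pi * Complex.I := by
    push_cast
    field_simp
  have := mem_polyVerts s hs ((i : ℕ) + s)
  rw [key, Complex.exp_add, Complex.exp_pi_mul_I, mul_neg_one] at this
  exact this

lemma one_mem_polyVerts (s : ℕ) (hs : 1 ≤ s) : (1 : ℂ) ∈ polyVerts s := by
  have := mem_polyVerts s hs 0
  simpa using this

lemma polyVerts_subset_ball (s : ℕ) : polyVerts s ⊆ Metric.closedBall (0 : ℂ) 1 := by
  rintro x ⟨i, rfl⟩
  have : Real.pi * Complex.I * (i : ℂ) / s = ((Real.pi * i / s : ℝ) : ℂ) * Complex.I := by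
    push_cast
    ring
  rw [Metric.mem_closedBall, dist_zero_right, this,
    Complex.norm_exp_ofReal_mul_I]

lemma convex_rp (s : ℕ) : Convex ℝ (regularPolygon s) := convex_convexHull ℝ _

lemma neg_mem_rp (s : ℕ) (hs : 1 ≤ s) {x : ℂ} (hx : x ∈ regularPolygon s) :
    -x ∈ regularPolygon s := by
  have h1 : -x ∈ -regularPolygon s := neg_mem_neg.2 hx
  rw [regularPolygon_eq, ← convexHull_neg] at h1
  exact convexHull_mono (fun y hy => by
    rw [mem_neg] at hy
    simpa [polyVerts] using polyVerts_neg s hs hy) h1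

lemma one_mem_rp (s : ℕ) (hs : 1 ≤ s) : (1 : ℂ) ∈ regularPolygon s :=
  subset_convexHull ℝ _ (one_mem_polyVerts s hs)

lemma zero_mem_rp (s : ℕ) (hs : 1 ≤ s) : (0 : ℂ) ∈ regularPolygon s := by
  have h1 := one_mem_rp s hs
  have h2 := neg_mem_rp s hs h1
  have := convex_rp s h1 h2 (by norm_num : (0:ℝ) ≤ 1/2) (by norm_num : (0:ℝ) ≤ 1/2)
    (by norm_num)
  simpa using this

lemma balanced_rp (s : ℕ) (hs : 1 ≤ s) : Balanced ℝ (regularPolygon s) := by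
  intro a ha
  rintro x ⟨y, hy, rfl⟩
  show a • y ∈ regularPolygon s
  rw [Real.norm_eq_abs] at ha
  rcases le_or_gt 0 a with h | h
  · exact (convex_rp s).smul_mem_of_zero_mem (zero_mem_rp s hs) hy
      ⟨h, by rwa [_root_.abs_of_nonneg h] at ha⟩
  · have heq : a • y = (-a) • (-y) := by simp
    rw [heq]
    exact (convex_rp s).smul_mem_of_zero_mem (zero_mem_rp s hs) (neg_mem_rp s hs hy)
      ⟨by linarith, by rwa [_root_.abs_of_neg h] at ha⟩

lemma bounded_rp (s : ℕ) : Bornology.IsVonNBounded ℝ (regularPolygon s) := by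
  have hsub : regularPolygon s ⊆ Metric.closedBall (0 : ℂ) 1 :=
    convexHull_min (polyVerts_subset_ball s) (convex_closedBall _ _)
  exact (NormedSpace.isVonNBounded_closedBall ℝ ℂ 1).subset hsub

lemma mul_mem_rp (s : ℕ) (hs : 1 ≤ s) {y z : ℂ} (hy : y ∈ regularPolygon s)
    (hz : z ∈ regularPolygon s) : y * z ∈ regularPolygon s := by
  have step1 : ∀ v ∈ polyVerts s, ∀ w ∈ regularPolygon s, v * w ∈ regularPolygon s := by
    intro v hv w hw
    have h1 : v * w ∈ (LinearMap.mulLeft ℝ v) '' regularPolygon s := ⟨w, hw, rfl⟩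
    rw [regularPolygon_eq, LinearMap.image_convexHull] at h1
    refine convexHull_mono ?_ h1
    rintro u ⟨p, hp, rfl⟩
    exact polyVerts_mul s hs hv hp
  have h1 : y * z ∈ (LinearMap.mulRight ℝ z) '' regularPolygon s := ⟨y, hy, rfl⟩
  rw [regularPolygon_eq, LinearMap.image_convexHull] at h1
  have h2 : (LinearMap.mulRight ℝ z) '' polyVerts s ⊆ regularPolygon s := by
    rintro u ⟨p, hp, rfl⟩
    exact step1 p hp z hz
  have := convexHull_mono h2 h1
  rwa [(convex_rp s).convexHull_eq] at this

lemma omega_mem_rp (s : ℕ) (hs : 1 ≤ s) :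
    Complex.exp (Real.pi * Complex.I * (1 : ℕ) / s) ∈ regularPolygon s :=
  subset_convexHull ℝ _ (mem_polyVerts s hs 1)

lemma exists_smul_mem_rp (s : ℕ) (hs : 2 ≤ s) (x : ℂ) :
    ∃ c : ℝ, 0 < c ∧ x ∈ c • regularPolygon s := by
  have hs1 : 1 ≤ s := by omega
  have hs0 : (0:ℝ) < (s:ℝ) := by positivity
  set ω : ℂ := Complex.exp (Real.pi * Complex.I * (1 : ℕ) / s) with hω
  have hωmem : ω ∈ regularPolygon s := omega_mem_rp s hs1
  have hωeq : ω = ((Real.cos (Real.pi / s) : ℝ) : ℂ)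
      + ((Real.sin (Real.pi / s) : ℝ) : ℂ) * Complex.I := by
    have h1 : (Real.pi : ℂ) * Complex.I * ((1:ℕ) : ℂ) / s
        = (((Real.pi / s : ℝ)) : ℂ) * Complex.I := by push_cast; ring
    rw [hω, h1, Complex.exp_mul_I, ← Complex.ofReal_cos, ← Complex.ofReal_sin]
  have hβ : 0 < Real.sin (Real.pi / s) := by
    apply Real.sin_pos_of_pos_of_lt_pi
    · positivity
    · rw [div_lt_iff₀ hs0]
      have h2 : (2:ℝ) ≤ (s:ℝ) := by exact_mod_cast hs
      nlinarith [Real.pi_pos]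
  set β := Real.sin (Real.pi / s) with hβdef
  set b : ℝ := x.im / β with hb
  set a : ℝ := x.re - b * Real.cos (Real.pi / s) with ha
  have hxab : x = a • (1 : ℂ) + b • ω := by
    rw [hωeq, Complex.real_smul, Complex.real_smul]
    apply Complex.ext <;>
      simp only [Complex.add_re, Complex.add_im, Complex.mul_re, Complex.mul_im,
        Complex.ofReal_re, Complex.ofReal_im, Complex.I_re, Complex.I_im, Complex.one_re,
        Complex.one_im, ha, hb]
    · ring
    · field_simp; ring
  set c : ℝ := |a| + |b| + 1 with hc
  have hcpos : 0 < c := by positivity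
  refine ⟨c, hcpos, ?_⟩
  rw [mem_smul_set_iff_inv_smul_mem₀ hcpos.ne']
  set w₁ : ℂ := if 0 ≤ a then 1 else -1 with hw₁
  set w₂ : ℂ := if 0 ≤ b then ω else -ω with hw₂
  have hw₁mem : w₁ ∈ regularPolygon s := by
    rw [hw₁]; split
    · exact one_mem_rp s hs1
    · exact neg_mem_rp s hs1 (one_mem_rp s hs1)
  have hw₂mem : w₂ ∈ regularPolygon s := by
    rw [hw₂]; split
    · exact hωmem
    · exact neg_mem_rp s hs1 hωmem
  have e1 : (|a|/c) • w₁ = (a/c) • (1 : ℂ) := by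
    rcases le_or_gt 0 a with h | h
    · rw [hw₁, if_pos h, _root_.abs_of_nonneg h]
    · rw [hw₁, if_neg (not_le.2 h), _root_.abs_of_neg h]; module
  have e2 : (|b|/c) • w₂ = (b/c) • ω := by
    rcases le_or_gt 0 b with h | h
    · rw [hw₂, if_pos h, _root_.abs_of_nonneg h]
    · rw [hw₂, if_neg (not_le.2 h), _root_.abs_of_neg h]; module
  have key : c⁻¹ • x = (|a|/c) • w₁ + (|b|/c) • w₂ + (1 - |a|/c - |b|/c) • (0 : ℂ) := by
    rw [e1, e2, smul_zero, add_zero, hxab]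
    module
  have h0c3 : (0:ℝ) ≤ 1 - |a|/c - |b|/c := by
    have h1 : |a|/c + |b|/c ≤ 1 := by
      rw [← add_div, div_le_one hcpos]
      rw [hc]; linarith
    linarith
  rw [key]
  have := (convex_rp s).sum_mem (t := (Finset.univ : Finset (Fin 3)))
    (w := ![|a|/c, |b|/c, 1 - |a|/c - |b|/c]) (z := ![w₁, w₂, 0])
    (fun i _ => by
      fin_cases i <;>
        simp only [Matrix.cons_val_zero, Matrix.cons_val_one, Matrix.head_cons,
          Matrix.cons_val_two, Matrix.tail_cons]
      · exact div_nonneg (abs_nonneg a) hcpos.le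
      · exact div_nonneg (abs_nonneg b) hcpos.le
      · exact h0c3)
    (by simp [Fin.sum_univ_three])
    (fun i _ => by fin_cases i <;> simp [hw₁mem, hw₂mem, zero_mem_rp s hs1])
  simpa [Fin.sum_univ_three] using this

lemma absorbent_rp (s : ℕ) (hs : 2 ≤ s) : Absorbent ℝ (regularPolygon s) := by
  have hs1 : 1 ≤ s := by omega
  intro x
  obtain ⟨c, hc, hx⟩ := exists_smul_mem_rp s hs x
  rw [absorbs_iff_norm]
  refine ⟨c, fun r hr => singleton_subset_iff.2 ?_⟩
  have hrpos : 0 < ‖r‖ := lt_of_lt_of_le hc hr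
  have hr0 : r ≠ 0 := by
    intro h; rw [h, norm_zero] at hrpos; exact lt_irrefl _ hrpos
  rw [mem_smul_set_iff_inv_smul_mem₀ hr0]
  obtain ⟨y, hy, rfl⟩ := hx
  rw [smul_smul]
  refine (balanced_rp s hs1).smul_mem ?_ hy
  rw [norm_mul, norm_inv]
  rw [inv_mul_le_iff₀ hrpos, mul_one]
  calc ‖c‖ = c := by rw [Real.norm_eq_abs, _root_.abs_of_pos hc]
    _ ≤ ‖r‖ := hr

end Aux

open Pointwise in
/-- For `s ≥ 2` the Minkowski functional of the regular `2s`-gon is a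
sub-multiplicative norm on `ℂ` viewed as a real vector space. -/
theorem stmt_3 (s : ℕ) (hs : 2 ≤ s) :
    (∀ z : ℂ, gauge (regularPolygon s) z = 0 ↔ z = 0) ∧
    (∀ y z : ℂ, gauge (regularPolygon s) (y + z) ≤
      gauge (regularPolygon s) y + gauge (regularPolygon s) z) ∧
    (∀ (r : ℝ) (z : ℂ), gauge (regularPolygon s) ((r : ℂ) * z) =
      |r| * gauge (regularPolygon s) z) ∧
    (∀ y z : ℂ, gauge (regularPolygon s) (y * z) ≤
      gauge (regularPolygon s) y * gauge (regularPolygon s) z) := by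
  have hs1 : 1 ≤ s := by omega
  have habs := absorbent_rp s hs
  have hbdd := bounded_rp s
  have hconv := convex_rp s
  have hbal := balanced_rp s hs1
  refine ⟨fun z => gauge_eq_zero habs hbdd, fun y z => gauge_add_le hconv habs y z, ?_, ?_⟩
  · intro r z
    have h1 : ((r : ℝ) : ℂ) * z = r • z := (Complex.real_smul).symm
    rw [h1, gauge_smul hbal, Real.norm_eq_abs]
  · intro y z
    by_cases hy : y = 0
    · simp [hy, gauge_zero]
    by_cases hz : z = 0
    · simp [hz, gauge_zero]
    have hgy : 0 < gauge (regularPolygon s) y := (gauge_pos habs hbdd).2 hy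
    have hgz : 0 < gauge (regularPolygon s) z := (gauge_pos habs hbdd).2 hz
    refine le_of_forall_gt_imp_ge_of_dense fun c hc => ?_
    have hcpos : 0 < c := lt_trans (mul_pos hgy hgz) hc
    have h1 : gauge (regularPolygon s) y < c / gauge (regularPolygon s) z :=
      (lt_div_iff₀ hgz).2 hc
    obtain ⟨r, hr0, hrlt, hyr⟩ := exists_lt_of_gauge_lt habs h1
    have h2 : gauge (regularPolygon s) z < c / r := by
      rw [lt_div_iff₀ hr0, mul_comm]
      exact (lt_div_iff₀ hgz).1 hrlt
    obtain ⟨d, hd0, hdlt, hzd⟩ := exists_lt_of_gauge_lt habs h2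
    obtain ⟨u, hu, huy⟩ := hyr
    obtain ⟨v, hv, hvz⟩ := hzd
    have hprod : y * z = (r * d) • (u * v) := by
      rw [← huy, ← hvz, smul_mul_smul_comm]
    have hmem : y * z ∈ (r * d) • regularPolygon s := by
      rw [hprod]
      exact Set.smul_mem_smul_set (mul_mem_rp s hs1 hu hv)
    have h3 : gauge (regularPolygon s) (y * z) ≤ r * d :=
      gauge_le_of_mem (mul_nonneg hr0.le hd0.le) hmem
    refine h3.trans ?_
    have h4 : r * d < r * (c / r) := mul_lt_mul_of_pos_left hdlt hr0
    rw [mul_div_cancel₀ _ hr0.ne'] at h4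
    exact h4.le
end

section
/- Let A be a real d×d matrix with a simple eigenvalue λ₁ > 0 such that every other eigenvalue λ satisfies |Re λ| + |Im λ| < λ₁. Suppose (V_{i,j}) is a real basis of R^d in which A acts as a block matrix: A V_{1,1} = λ₁ V_{1,1}, and for each Jordan-type block i ≥ 2, A V_{i,j} = λ_i V_{i,j} + ε V_{i,j−1} (with V_{i,0} := 0 convention, i.e., A V_{i,1} = λ_i V_{i,1}), where 0 < ε < λ₁ − (|Re λ_i| + |Im λ_i|) for all i ≠ 1. Then the cone L = { a_{1,1} V_{1,1} + Σ_{i≥2, j} a_{i,j} V_{i,j} : a_{1,1} ≥ ‖a_{i,j}‖₁ for all i,j, and a_{i,j} = conjugate of a_{p,q} whenever V_{i,j} is the conjugate of V_{p,q} } is contracted by A, i.e., A(L \ {0}) ⊆ L°. -/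
open Complex

lemma n1_mul (z w : ℂ) : |(z*w).re| + |(z*w).im| ≤ (|z.re|+|z.im|) * (|w.re|+|w.im|) := by
  simp only [Complex.mul_re, Complex.mul_im]
  have h1 : |z.re*w.re - z.im*w.im| ≤ |z.re| * |w.re| + |z.im| * |w.im| :=
    (abs_sub _ _).trans (by rw [abs_mul, abs_mul])
  have h2 : |z.re*w.im + z.im*w.re| ≤ |z.re| * |w.im| + |z.im| * |w.re| :=
    (abs_add_le _ _).trans (by rw [abs_mul, abs_mul])
  nlinarith [abs_nonneg z.re, abs_nonneg z.im, abs_nonneg w.re, abs_nonneg w.im]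

lemma n1_add (z w : ℂ) : |(z+w).re| + |(z+w).im| ≤ (|z.re|+|z.im|) + (|w.re|+|w.im|) := by
  simp only [Complex.add_re, Complex.add_im]
  have := abs_add_le z.re w.re
  have := abs_add_le z.im w.im
  linarith

/-- The polyhedral cone `L(V_{i,j})` built from an ε-Jordan basis, using the
1-norm `‖z‖₁ = |Re z| + |Im z|`, is contracted by `A` when every non-dominant
eigenvalue `λ_i` satisfies `‖λ_i‖₁ < λ₁` and `0 < ε < λ₁ - ‖λ_i‖₁`. -/
theorem stmt_4 (d k : ℕ) (hk : 0 < k) (m : Fin k → ℕ) (hm0 : m ⟨0, hk⟩ = 1)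
    (hcard : ∑ i, m i = d)
    (A : Matrix (Fin d) (Fin d) ℝ)
    (lam : Fin k → ℂ) (lam1 : ℝ) (hlam1 : lam ⟨0, hk⟩ = (lam1 : ℂ)) (hlam1pos : 0 < lam1)
    (ε : ℝ) (hε : 0 < ε)
    (hdom : ∀ i : Fin k, i ≠ ⟨0, hk⟩ → |(lam i).re| + |(lam i).im| < lam1)
    (hε2 : ∀ i : Fin k, i ≠ ⟨0, hk⟩ → ε < lam1 - (|(lam i).re| + |(lam i).im|))
    (V : (i : Fin k) → Fin (m i) → (Fin d → ℂ))
    (hbasis : LinearIndependent ℂ (fun p : Σ i : Fin k, Fin (m i) => V p.1 p.2))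
    (hAV : ∀ (i : Fin k) (j : Fin (m i)),
      (A.map (Complex.ofReal)).mulVec (V i j) =
        lam i • V i j +
          if h : (j : ℕ) = 0 then 0
          else (ε : ℂ) • V i ⟨(j : ℕ) - 1, lt_of_le_of_lt (Nat.sub_le _ _) j.isLt⟩)
    (σ : Fin k → Fin k) (hσm : ∀ i, m (σ i) = m i)
    (hσlam : ∀ i, lam (σ i) = (starRingEnd ℂ) (lam i))
    (hσV : ∀ (i : Fin k) (j : Fin (m i)),
      V (σ i) (Fin.cast (hσm i).symm j) = fun t => (starRingEnd ℂ) (V i j t))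
    (L : Set (Fin d → ℝ))
    (hL : L = {x : Fin d → ℝ | ∃ a : (i : Fin k) → Fin (m i) → ℂ,
      (∀ (i : Fin k) (j : Fin (m i)),
        a (σ i) (Fin.cast (hσm i).symm j) = (starRingEnd ℂ) (a i j)) ∧
      (∀ (i : Fin k) (j : Fin (m i)) (j0 : Fin (m ⟨0, hk⟩)),
        |(a i j).re| + |(a i j).im| ≤ (a ⟨0, hk⟩ j0).re) ∧
      (∀ t : Fin d, (x t : ℂ) = ∑ i : Fin k, ∑ j : Fin (m i), a i j * V i j t)}) :
    ∀ x ∈ L, x ≠ 0 → A.mulVec x ∈ interior L := by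
  -- notation
  set i0 : Fin k := ⟨0, hk⟩ with hi0
  have hm0' : m i0 = 1 := hm0
  set S := Σ i : Fin k, Fin (m i) with hS
  set e : S → (Fin d → ℂ) := fun p => V p.1 p.2 with he
  set z0 : S := ⟨i0, ⟨0, by omega⟩⟩ with hz0
  haveI : Nonempty S := ⟨z0⟩
  have hSext : ∀ p q : S, p.1 = q.1 → ((p.2 : ℕ) = (q.2 : ℕ)) → p = q := by
    rintro ⟨i, j⟩ ⟨i', j'⟩ h1 h2
    dsimp at h1 h2
    subst h1
    congr 1
    exact Fin.ext h2
  have hj0uniq : ∀ j0 : Fin (m i0), j0 = z0.2 := by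
    intro j0; apply Fin.ext; have := j0.isLt; omega
  have hp1 : ∀ p : S, p ≠ z0 → p.1 ≠ i0 := by
    intro p hp h1
    have h2 : m p.1 = 1 := by rw [h1]; exact hm0'
    have h3 : ((z0 : S).2 : ℕ) = 0 := rfl
    exact hp (hSext p z0 h1 (by have := p.2.isLt; omega))
  -- the basis
  obtain ⟨B, hBe⟩ : ∃ B : Module.Basis S ℂ (Fin d → ℂ), ⇑B = e := by
    refine ⟨basisOfLinearIndependentOfCardEqFinrank hbasis ?_, coe_basisOfLinearIndependentOfCardEqFinrank _ _⟩
    show Fintype.card ((i : Fin k) × Fin (m i)) = _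
    simp [Fintype.card_sigma, hcard, Module.finrank_pi]
  -- complexification
  set cx : (Fin d → ℝ) → (Fin d → ℂ) := fun x t => (x t : ℂ) with hcx
  set Φ : (Fin d → ℝ) → S → ℂ := fun x p => B.repr (cx x) p with hΦ
  -- uniqueness of coefficients
  have huniq : ∀ (c : S → ℂ) (x : Fin d → ℝ), cx x = ∑ p : S, c p • e p → ∀ p, Φ x p = c p := by
    intro c x hx p
    rw [hΦ]
    simp only
    rw [hx]
    rw [show (∑ p : S, c p • e p) = ∑ p : S, c p • B p by simp [hBe]]
    rw [Module.Basis.repr_sum_self]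
  have hsum : ∀ x : Fin d → ℝ, cx x = ∑ p : S, Φ x p • e p := by
    intro x
    conv_lhs => rw [← B.sum_repr (cx x)]
    simp [hBe, hΦ]
  -- τ and symmetry
  set τ : S → S := fun p => ⟨σ p.1, Fin.cast (hσm p.1).symm p.2⟩ with hτ
  have heτ : ∀ p : S, e (τ p) = fun t => (starRingEnd ℂ) (e p t) := by
    intro p; exact hσV p.1 p.2
  have hτinj : Function.Injective τ := by
    intro p q hpq
    apply hbasis.injective
    have h1 := heτ p
    have h2 := heτ q
    rw [hpq, h2] at h1
    funext t
    exact (starRingEnd ℂ).injective (congrFun h1.symm t)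
  obtain ⟨τe, hτe⟩ : ∃ τe : S ≃ S, ∀ p, τe p = τ p :=
    ⟨Equiv.ofBijective τ (Finite.injective_iff_bijective.mp hτinj), fun _ => rfl⟩
  have hsymm : ∀ (y : Fin d → ℝ) (p : S), Φ y (τ p) = (starRingEnd ℂ) (Φ y p) := by
    intro y
    have key : cx y = ∑ p : S, ((starRingEnd ℂ) (Φ y (τe.symm p))) • e p := by
      have h1 : cx y = fun t => (starRingEnd ℂ) (cx y t) := by
        funext t; simp [hcx]
      calc cx y = fun t => (starRingEnd ℂ) ((∑ p : S, Φ y p • e p) t) := by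
            funext t
            rw [← hsum y]
            exact congrFun h1 t
        _ = ∑ p : S, ((starRingEnd ℂ) (Φ y p)) • e (τ p) := by
            funext t
            simp only [Finset.sum_apply, map_sum, Pi.smul_apply, smul_eq_mul, map_mul]
            exact Finset.sum_congr rfl fun p _ => by simp [heτ p]
        _ = ∑ p : S, ((starRingEnd ℂ) (Φ y (τe.symm p))) • e p := by
            rw [← Equiv.sum_comp τe (fun p => ((starRingEnd ℂ) (Φ y (τe.symm p))) • e p)]
            apply Finset.sum_congr rfl
            intro p _
            rw [Equiv.symm_apply_apply, hτe]
    intro p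
    have := huniq _ y key (τ p)
    rw [this]
    congr 1
    rw [← hτe, Equiv.symm_apply_apply]
  -- σ fixes i0, so Φ y z0 is real
  have hσ0 : σ i0 = i0 := by
    by_contra h
    have h2 := hdom (σ i0) h
    rw [hσlam i0, hlam1] at h2
    simp only [Complex.conj_ofReal, Complex.ofReal_re, Complex.ofReal_im, abs_zero, add_zero] at h2
    rw [abs_of_pos hlam1pos] at h2
    exact lt_irrefl _ h2
  have hτz0 : τ z0 = z0 := hSext _ _ hσ0 rfl
  have him0 : ∀ y : Fin d → ℝ, (Φ y z0).im = 0 := by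
    intro y
    have h := hsymm y z0
    rw [hτz0] at h
    have h2 := congrArg Complex.im h
    simp at h2
    linarith
  -- membership in L in terms of Φ
  have hLmem : ∀ y : Fin d → ℝ, (0 ≤ (Φ y z0).re ∧
      ∀ p : S, p ≠ z0 → |(Φ y p).re| + |(Φ y p).im| ≤ (Φ y z0).re) → y ∈ L := by
    rintro y ⟨hy1, hy2⟩
    rw [hL]
    refine ⟨fun i j => Φ y ⟨i, j⟩, ?_, ?_, ?_⟩
    · intro i j
      exact hsymm y ⟨i, j⟩
    · intro i j j0
      have hj : (⟨i0, j0⟩ : S) = z0 := hSext _ _ rfl (by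
        have h3 : ((⟨i0, j0⟩ : S).2 : ℕ) = (j0 : ℕ) := rfl
        have h4 : ((z0 : S).2 : ℕ) = 0 := rfl
        have h5 := j0.isLt
        have h6 := hm0'
        omega)
      show |(Φ y ⟨i, j⟩).re| + |(Φ y ⟨i, j⟩).im| ≤ (Φ y ⟨i0, j0⟩).re
      rw [hj]
      by_cases hp : (⟨i, j⟩ : S) = z0
      · rw [hp, him0 y, _root_.abs_of_nonneg hy1, abs_zero, add_zero]
      · exact hy2 ⟨i, j⟩ hp
    · intro t
      have h := congrFun (hsum y) t
      rw [hcx] at h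
      simp only at h
      rw [h, Finset.sum_apply, ← Finset.univ_sigma_univ, Finset.sum_sigma]
      rfl
  -- the open set U
  set r : (Fin d → ℝ) → ℝ := fun y => (Φ y z0).re with hr
  set U : Set (Fin d → ℝ) := {y | 0 < r y ∧
      ∀ p : S, p ≠ z0 → |(Φ y p).re| + |(Φ y p).im| < r y} with hU
  have hcont : ∀ p : S, Continuous fun y => Φ y p := by
    intro p
    let F : (Fin d → ℝ) →ₗ[ℝ] ℂ :=
      { toFun := fun y => Φ y p
        map_add' := by
          intro y z
          show B.repr (cx (y + z)) p = B.repr (cx y) p + B.repr (cx z) p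
          have h : cx (y + z) = cx y + cx z := by
            funext t; simp [hcx]
          rw [h, map_add, Finsupp.add_apply]
        map_smul' := by
          intro c y
          show B.repr (cx (c • y)) p = c • B.repr (cx y) p
          have h : cx (c • y) = (c : ℂ) • cx y := by
            funext t; simp [hcx, Complex.real_smul]
          rw [h, map_smul, Finsupp.smul_apply]
          simp [Complex.real_smul] }
    exact F.continuous_of_finiteDimensional
  have hUopen : IsOpen U := by
    have heq : U =
        {y : Fin d → ℝ | 0 < r y} ∩ ⋂ p : S, {y | p ≠ z0 → |(Φ y p).re| + |(Φ y p).im| < r y} := by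
      ext y
      simp only [hU, Set.mem_setOf_eq, Set.mem_inter_iff, Set.mem_iInter]
    rw [heq]
    apply IsOpen.inter
    · exact isOpen_lt continuous_const (Complex.continuous_re.comp (hcont z0))
    · apply isOpen_iInter_of_finite
      intro p
      by_cases hp : p = z0
      · simp [hp]
      · simp only [hp, ne_eq, not_false_iff, true_implies]
        exact isOpen_lt
          (((continuous_abs.comp (Complex.continuous_re.comp (hcont p)))).add
            ((continuous_abs.comp (Complex.continuous_im.comp (hcont p)))))
          (Complex.continuous_re.comp (hcont z0))
  have hUL : U ⊆ L := by
    intro y hy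
    exact hLmem y ⟨le_of_lt hy.1, fun p hp => le_of_lt (hy.2 p hp)⟩
  -- the action of A on coefficients
  set nxt : (S → ℂ) → S → ℂ := fun c p =>
    if h : (p.2 : ℕ) + 1 < m p.1 then c ⟨p.1, ⟨(p.2 : ℕ) + 1, h⟩⟩ else 0 with hnxt
  have hact : ∀ (x : Fin d → ℝ) (p : S),
      Φ (A.mulVec x) p = lam p.1 * Φ x p + (ε : ℂ) * nxt (Φ x) p := by
    intro x
    apply huniq
    have step1 : cx (A.mulVec x) = (A.map Complex.ofReal).mulVec (cx x) := by
      funext t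
      rw [hcx]
      simp only [Matrix.mulVec, dotProduct, Matrix.map_apply]
      push_cast
      rfl
    rw [step1, hsum x]
    have step2 : (A.map Complex.ofReal).mulVec (∑ p : S, Φ x p • e p) =
        ∑ p : S, Φ x p • (A.map Complex.ofReal).mulVec (e p) := by
      rw [show ∀ v, (A.map Complex.ofReal).mulVec v = (A.map Complex.ofReal).mulVecLin v
        from fun _ => rfl]
      rw [map_sum]
      simp [Matrix.mulVecLin_apply]
    rw [step2]
    have step3 : ∀ p : S, (A.map Complex.ofReal).mulVec (e p) =
        lam p.1 • e p + (if h : (p.2 : ℕ) = 0 then 0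
          else (ε : ℂ) • e ⟨p.1, ⟨(p.2 : ℕ) - 1, lt_of_le_of_lt (Nat.sub_le _ _) p.2.isLt⟩⟩) := by
      intro p; exact hAV p.1 p.2
    calc ∑ p : S, Φ x p • (A.map Complex.ofReal).mulVec (e p)
        = ∑ p : S, (lam p.1 * Φ x p) • e p +
          ∑ p : S, Φ x p • (if h : (p.2 : ℕ) = 0 then (0 : Fin d → ℂ)
            else (ε : ℂ) • e ⟨p.1, ⟨(p.2 : ℕ) - 1, lt_of_le_of_lt (Nat.sub_le _ _) p.2.isLt⟩⟩) := by
          rw [← Finset.sum_add_distrib]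
          apply Finset.sum_congr rfl
          intro p _
          rw [step3 p, smul_add, smul_smul, mul_comm]
      _ = ∑ p : S, (lam p.1 * Φ x p) • e p + ∑ p : S, ((ε : ℂ) * nxt (Φ x) p) • e p := by
          congr 1
          rw [← Finset.univ_sigma_univ, Finset.sum_sigma, Finset.sum_sigma]
          apply Finset.sum_congr rfl
          intro i _
          -- per-block shift reindexing
          set G : ℕ → (Fin d → ℂ) := fun t =>
            if h : t + 1 < m i then ((ε : ℂ) * Φ x ⟨i, ⟨t + 1, h⟩⟩) • e ⟨i, ⟨t, Nat.lt_of_succ_lt h⟩⟩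
            else 0 with hG
          have hR : ∀ j : Fin (m i), ((ε : ℂ) * nxt (Φ x) ⟨i, j⟩) • e ⟨i, j⟩ = G (j : ℕ) := by
            intro j
            simp only [hnxt, hG]
            by_cases h : (j : ℕ) + 1 < m i
            · rw [dif_pos h, dif_pos h]
            · rw [dif_neg h, dif_neg h, mul_zero, zero_smul]
          have hLh : ∀ j : Fin (m i), Φ x ⟨i, j⟩ • (if h : (j : ℕ) = 0 then (0 : Fin d → ℂ)
              else (ε : ℂ) • e ⟨i, ⟨(j : ℕ) - 1, lt_of_le_of_lt (Nat.sub_le _ _) j.isLt⟩⟩) =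
              (if (j : ℕ) = 0 then (0 : Fin d → ℂ) else G ((j : ℕ) - 1)) := by
            intro j
            by_cases h : (j : ℕ) = 0
            · rw [dif_pos h, if_pos h, smul_zero]
            · rw [dif_neg h, if_neg h]
              simp only [hG]
              have h1 : (j : ℕ) - 1 + 1 = (j : ℕ) := Nat.succ_pred_eq_of_pos (Nat.pos_of_ne_zero h)
              have h2 : (j : ℕ) - 1 + 1 < m i := by rw [h1]; exact j.isLt
              rw [dif_pos h2, smul_smul, mul_comm]
              congr 2
              · congr 1
                exact hSext _ _ rfl (by simp [h1])
          rw [show (∑ j : Fin (m i), Φ x ⟨i, j⟩ • (if h : (j : ℕ) = 0 then (0 : Fin d → ℂ)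
              else (ε : ℂ) • e ⟨i, ⟨(j : ℕ) - 1, lt_of_le_of_lt (Nat.sub_le _ _) j.isLt⟩⟩)) =
              ∑ j : Fin (m i), (if (j : ℕ) = 0 then (0 : Fin d → ℂ) else G ((j : ℕ) - 1))
            from Finset.sum_congr rfl fun j _ => hLh j]
          rw [show (∑ j : Fin (m i), ((ε : ℂ) * nxt (Φ x) ⟨i, j⟩) • e ⟨i, j⟩) =
              ∑ j : Fin (m i), G (j : ℕ) from Finset.sum_congr rfl fun j _ => hR j]
          rw [Fin.sum_univ_eq_sum_range (fun t => if t = 0 then (0 : Fin d → ℂ) else G (t - 1)),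
            Fin.sum_univ_eq_sum_range G]
          rcases Nat.eq_zero_or_pos (m i) with h0 | h0
          · rw [h0]; simp
          · obtain ⟨n, hn⟩ := Nat.exists_eq_succ_of_ne_zero (Nat.pos_iff_ne_zero.mp h0)
            rw [hn, Finset.sum_range_succ', Finset.sum_range_succ,
              show G n = 0 from dif_neg (by omega)]
            simp
      _ = ∑ p : S, (lam p.1 * Φ x p + (ε : ℂ) * nxt (Φ x) p) • e p := by
          rw [← Finset.sum_add_distrib]
          apply Finset.sum_congr rfl
          intro p _
          rw [add_smul]
  -- main argument
  intro x hx hx0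
  rw [hL] at hx
  obtain ⟨a, ha1, ha2, ha3⟩ := hx
  have hax : ∀ p : S, Φ x p = a p.1 p.2 := by
    apply huniq
    funext t
    rw [hcx]
    simp only
    rw [ha3 t, Finset.sum_apply, ← Finset.univ_sigma_univ, Finset.sum_sigma]
    rfl
  have hble : ∀ p : S, |(Φ x p).re| + |(Φ x p).im| ≤ r x := by
    intro p
    rw [hax p, hr]
    simp only [hax z0]
    exact ha2 p.1 p.2 z0.2
  have hrpos : 0 < r x := by
    have h0 : 0 ≤ r x := le_trans (by positivity) (hble z0)
    rcases eq_or_lt_of_le h0 with h | h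
    · exfalso
      apply hx0
      have hall : ∀ p : S, Φ x p = 0 := by
        intro p
        have hp := hble p
        rw [← h] at hp
        have h1 := abs_nonneg (Φ x p).re
        have h2 := abs_nonneg (Φ x p).im
        apply Complex.ext
        · simpa using abs_eq_zero.mp (le_antisymm (by linarith) h1)
        · simpa using abs_eq_zero.mp (le_antisymm (by linarith) h2)
      funext t
      have h3 := congrFun (hsum x) t
      rw [hcx] at h3
      simp only at h3
      rw [Finset.sum_apply] at h3
      have h4 : (x t : ℂ) = 0 := by
        rw [h3]
        apply Finset.sum_eq_zero
        intro p _
        rw [hall p, zero_smul]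
        rfl
      exact_mod_cast h4
    · exact h
  -- evaluate Φ (A x)
  have hz0nxt : nxt (Φ x) z0 = 0 := by
    simp only [hnxt]
    rw [dif_neg]
    have h3 : ((z0 : S).2 : ℕ) = 0 := rfl
    have h4 : m z0.1 = 1 := hm0'
    omega
  have hAz0 : Φ (A.mulVec x) z0 = (lam1 : ℂ) * Φ x z0 := by
    rw [hact x z0, hz0nxt, mul_zero, add_zero]
    congr 1
  have hAz0re : (Φ (A.mulVec x) z0).re = lam1 * r x := by
    rw [hAz0, hr]
    simp [Complex.mul_re]
  apply interior_maximal hUL hUopen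
  show 0 < r (A.mulVec x) ∧ ∀ p : S, p ≠ z0 →
    |(Φ (A.mulVec x) p).re| + |(Φ (A.mulVec x) p).im| < r (A.mulVec x)
  have hrA : r (A.mulVec x) = lam1 * r x := hAz0re
  constructor
  · rw [hrA]; exact mul_pos hlam1pos hrpos
  · intro p hp
    rw [hrA, hact x p]
    have hi := hp1 p hp
    have hlt := hdom p.1 hi
    have hεlt := hε2 p.1 hi
    have hnle : |(nxt (Φ x) p).re| + |(nxt (Φ x) p).im| ≤ r x := by
      simp only [hnxt]
      by_cases h : (p.2 : ℕ) + 1 < m p.1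
      · rw [dif_pos h]; exact hble _
      · rw [dif_neg h]; simpa using le_of_lt hrpos
    have hεnorm : |((ε : ℂ)).re| + |((ε : ℂ)).im| = ε := by
      simp [abs_of_pos hε]
    have b1 := n1_add (lam p.1 * Φ x p) ((ε : ℂ) * nxt (Φ x) p)
    have b2 := n1_mul (lam p.1) (Φ x p)
    have b3 := n1_mul ((ε : ℂ)) (nxt (Φ x) p)
    rw [hεnorm] at b3
    have hble' := hble p
    have hlamnn : 0 ≤ |(lam p.1).re| + |(lam p.1).im| := by positivity
    nlinarith [hrpos, hble', hnle, hlamnn, hε.le]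
end

section
/- Let K be a proper cone in R^d and A a matrix contracting K, with unique (up to positive scalar) eigenvector v ∈ K° having all coordinates nonzero. Then for m sufficiently large, the cone A^m K is contained in the closed orthant determined by the signs of the coordinates of v (i.e., the set of x ∈ R^d with x_i ≥ 0 when v_i > 0 and x_i ≤ 0 when v_i < 0). -/
open Filter Topology

/-- If `A` contracts a proper cone `K`, with eigenvector `v ∈ K°` whose
coordinates are all nonzero, and `⋂ⱼ Aʲ K = ℝ₊·v` (Tam–Schneider), then for
`m` large enough the cone `A^m K` lies in the closed orthant given by the
signs of the coordinates of `v`. -/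
theorem stmt_6 (d : ℕ) (K : Set (Fin d → ℝ))
    (hadd : ∀ x ∈ K, ∀ y ∈ K, x + y ∈ K)
    (hsmul : ∀ (c : ℝ), 0 < c → ∀ x ∈ K, c • x ∈ K)
    (hclosed : IsClosed K) (hpointed : K ∩ (-K) ⊆ {0})
    (hsolid : (interior K).Nonempty)
    (A : Matrix (Fin d) (Fin d) ℝ)
    (hcontract : ∀ x ∈ K, x ≠ 0 → A.mulVec x ∈ interior K)
    (v : Fin d → ℝ) (hv : v ∈ interior K) (hvnz : ∀ i, v i ≠ 0)
    (lam : ℝ) (heig : A.mulVec v = lam • v)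
    (hTS : (⋂ j : ℕ, (fun x => (A ^ j).mulVec x) '' K) =
      {x : Fin d → ℝ | ∃ c : ℝ, 0 ≤ c ∧ x = c • v}) :
    ∃ m0 : ℕ, ∀ m ≥ m0, ∀ x ∈ K, ∀ i : Fin d,
      (0 < v i → 0 ≤ (A ^ m).mulVec x i) ∧ (v i < 0 → (A ^ m).mulVec x i ≤ 0) := by
  obtain hd | hd := isEmpty_or_nonempty (Fin d)
  · exact ⟨0, fun m _ x _ i => isEmptyElim i⟩
  have hvK : v ∈ K := interior_subset hv
  have hvne : v ≠ 0 := fun h => hvnz (Classical.arbitrary (Fin d)) (by rw [h]; rfl)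
  -- 0 ∈ K
  have h0K : (0 : Fin d → ℝ) ∈ K := by
    have h0 : (0 : Fin d → ℝ) ∈ ⋂ j : ℕ, (fun x => (A ^ j).mulVec x) '' K := by
      rw [hTS]; exact ⟨0, le_refl 0, by simp⟩
    have := Set.mem_iInter.mp h0 0
    simp only [pow_zero, Matrix.one_mulVec] at this
    simpa using this
  -- 0 ∉ interior K
  have h0nint : (0 : Fin d → ℝ) ∉ interior K := by
    intro h0
    obtain ⟨ε, hε, hball⟩ := Metric.mem_nhds_iff.mp (mem_interior_iff_mem_nhds.mp h0)
    have hvpos : 0 < ‖v‖ := norm_pos_iff.mpr hvne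
    set t := ε / (2 * ‖v‖) with ht
    have htpos : 0 < t := by positivity
    have hnorm : ‖t • v‖ < ε := by
      rw [norm_smul, Real.norm_of_nonneg htpos.le, ht, div_mul_eq_mul_div]
      rw [mul_comm 2 ‖v‖, ← div_div, mul_div_assoc, div_self hvpos.ne', mul_one]
      linarith
    have h1 : t • v ∈ K := hball (Metric.mem_ball.mpr (by rwa [dist_zero_right]))
    have h2 : -(t • v) ∈ K := hball (Metric.mem_ball.mpr (by rwa [dist_zero_right, norm_neg]))
    have : t • v ∈ K ∩ (-K) := ⟨h1, by simpa [Set.mem_neg] using h2⟩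
    have := hpointed this
    exact smul_ne_zero htpos.ne' hvne this
  have hAK : ∀ x ∈ K, A.mulVec x ∈ K := by
    intro x hx
    by_cases h : x = 0
    · subst h; simpa [Matrix.mulVec_zero] using h0K
    · exact interior_subset (hcontract x hx h)
  have hAmK : ∀ (n : ℕ), ∀ x ∈ K, (A ^ n).mulVec x ∈ K := by
    intro n
    induction n with
    | zero => intro x hx; simpa [Matrix.one_mulVec] using hx
    | succ n ih =>
      intro x hx
      have heq : (A ^ (n + 1)).mulVec x = A.mulVec ((A ^ n).mulVec x) := by
        rw [Matrix.mulVec_mulVec, ← pow_succ']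
      rw [heq]; exact hAK _ (ih x hx)
  have hker : ∀ (j : ℕ), ∀ x ∈ K, x ≠ 0 → (A ^ j).mulVec x ≠ 0 := by
    intro j
    induction j with
    | zero => intro x hx hxne; simpa [Matrix.one_mulVec] using hxne
    | succ n ih =>
      intro x hx hxne
      have hmem := hcontract _ (hAmK n x hx) (ih x hx hxne)
      have heq : (A ^ (n + 1)).mulVec x = A.mulVec ((A ^ n).mulVec x) := by
        rw [Matrix.mulVec_mulVec, ← pow_succ']
      rw [heq]
      intro h
      exact h0nint (h ▸ hmem)
  have hcont : ∀ j : ℕ, Continuous fun x : Fin d → ℝ => (A ^ j).mulVec x := by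
    intro j
    have := (Matrix.mulVecLin (A ^ j)).continuous_of_finiteDimensional
    exact this
  -- coercivity on K
  have hcoer : ∀ j : ℕ, ∃ c > 0, ∀ x ∈ K, c * ‖x‖ ≤ ‖(A ^ j).mulVec x‖ := by
    intro j
    have hScomp : IsCompact (K ∩ Metric.sphere (0 : Fin d → ℝ) 1) :=
      (isCompact_sphere 0 1).inter_left hclosed
    have hSne : (K ∩ Metric.sphere (0 : Fin d → ℝ) 1).Nonempty := by
      refine ⟨‖v‖⁻¹ • v, hsmul _ (inv_pos.mpr (norm_pos_iff.mpr hvne)) v hvK, ?_⟩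
      rw [mem_sphere_zero_iff_norm, norm_smul, norm_inv, norm_norm,
        inv_mul_cancel₀ (norm_ne_zero_iff.mpr hvne)]
    obtain ⟨x0, hx0S, hmin⟩ := hScomp.exists_isMinOn hSne ((hcont j).norm.continuousOn)
    have hx0ne : x0 ≠ 0 := by
      intro h
      have := hx0S.2
      rw [h, mem_sphere_zero_iff_norm] at this
      simp at this
    have hc : 0 < ‖(A ^ j).mulVec x0‖ := norm_pos_iff.mpr (hker j x0 hx0S.1 hx0ne)
    refine ⟨‖(A ^ j).mulVec x0‖, hc, fun x hx => ?_⟩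
    by_cases hxz : x = 0
    · simp [hxz, Matrix.mulVec_zero]
    · have hxn : 0 < ‖x‖ := norm_pos_iff.mpr hxz
      have hmem : ‖x‖⁻¹ • x ∈ K ∩ Metric.sphere (0 : Fin d → ℝ) 1 := by
        refine ⟨hsmul _ (inv_pos.mpr hxn) x hx, ?_⟩
        rw [mem_sphere_zero_iff_norm, norm_smul, norm_inv, norm_norm,
          inv_mul_cancel₀ hxn.ne']
      have hle' : ‖(A ^ j).mulVec x0‖ ≤ ‖(A ^ j).mulVec (‖x‖⁻¹ • x)‖ := hmin hmem
      rw [Matrix.mulVec_smul, norm_smul, norm_inv, norm_norm] at hle'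
      have h2 := mul_le_mul_of_nonneg_left hle' hxn.le
      rw [← mul_assoc, mul_inv_cancel₀ hxn.ne', one_mul] at h2
      rw [mul_comm]; exact h2
  -- each A^j K is closed
  have hSclosed : ∀ j : ℕ, IsClosed ((fun x => (A ^ j).mulVec x) '' K) := by
    intro j
    obtain ⟨c, hc, hcoerj⟩ := hcoer j
    apply IsSeqClosed.isClosed
    intro u z hu huz
    choose xs hxs hxeq using hu
    obtain ⟨R, hR⟩ := huz.norm.bddAbove_range
    have hxbdd : ∀ n, xs n ∈ K ∩ Metric.closedBall (0 : Fin d → ℝ) (c⁻¹ * R) := by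
      intro n
      refine ⟨hxs n, ?_⟩
      rw [Metric.mem_closedBall, dist_zero_right]
      have h1 : c * ‖xs n‖ ≤ ‖u n‖ := by
        rw [← hxeq n]; exact hcoerj _ (hxs n)
      have h2 : ‖u n‖ ≤ R := hR ⟨n, rfl⟩
      calc ‖xs n‖ = c⁻¹ * (c * ‖xs n‖) := by
            rw [← mul_assoc, inv_mul_cancel₀ hc.ne', one_mul]
        _ ≤ c⁻¹ * R := mul_le_mul_of_nonneg_left (h1.trans h2) (inv_nonneg.mpr hc.le)
    have hcomp : IsCompact (K ∩ Metric.closedBall (0 : Fin d → ℝ) (c⁻¹ * R)) :=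
      (isCompact_closedBall 0 _).inter_left hclosed
    obtain ⟨xlim, hxlim, φ, hφ, hφt⟩ := hcomp.tendsto_subseq hxbdd
    refine ⟨xlim, hxlim.1, ?_⟩
    have h1 : Tendsto (fun n => (A ^ j).mulVec (xs (φ n))) atTop
        (𝓝 ((A ^ j).mulVec xlim)) := ((hcont j).tendsto _).comp hφt
    have h2 : Tendsto (fun n => u (φ n)) atTop (𝓝 z) := huz.comp hφ.tendsto_atTop
    have h3 : (fun n => (A ^ j).mulVec (xs (φ n))) = fun n => u (φ n) := by
      funext n; exact hxeq (φ n)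
    rw [h3] at h1
    exact tendsto_nhds_unique h1 h2
  -- monotonicity of images
  have hsub : ∀ {j m' : ℕ}, j ≤ m' →
      ((fun x => (A ^ m').mulVec x) '' K) ⊆ ((fun x => (A ^ j).mulVec x) '' K) := by
    intro j m' hjm
    rintro _ ⟨x, hx, rfl⟩
    refine ⟨(A ^ (m' - j)).mulVec x, hAmK _ x hx, ?_⟩
    simp only
    have hj : j + (m' - j) = m' := by omega
    rw [Matrix.mulVec_mulVec, ← pow_add, hj]
  by_contra hcon
  push_neg at hcon
  have hchoice : ∀ k : ℕ, ∃ n : ℕ, k ≤ n ∧ ∃ x ∈ K, ∃ i : Fin d,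
      (0 < v i ∧ (A ^ n).mulVec x i < 0) ∨ (v i < 0 ∧ 0 < (A ^ n).mulVec x i) := by
    intro k
    obtain ⟨n, hn, x, hx, i, h⟩ := hcon k
    refine ⟨n, hn, x, hx, i, ?_⟩
    rcases (hvnz i).lt_or_gt with hvi | hvi
    · exact Or.inr (h (fun hp => absurd hp (by intro _; linarith)))
    · rcases lt_or_ge ((A ^ n).mulVec x i) 0 with h0 | h0
      · exact Or.inl ⟨hvi, h0⟩
      · exact absurd (h (fun _ => h0)).1 (by intro hh; linarith)
  choose m hm x hx i hbad using hchoice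
  set w : ℕ → Fin d → ℝ := fun k => (A ^ (m k)).mulVec (x k) with hw
  have hwne : ∀ k, w k ≠ 0 := by
    intro k hk
    rcases hbad k with ⟨_, h⟩ | ⟨_, h⟩ <;>
      · rw [show (A ^ (m k)).mulVec (x k) = w k from rfl, hk] at h
        simp at h
  have hwpos : ∀ k, 0 < ‖w k‖ := fun k => norm_pos_iff.mpr (hwne k)
  set y : ℕ → Fin d → ℝ := fun k => ‖w k‖⁻¹ • w k with hy
  have hysphere : ∀ k, y k ∈ Metric.sphere (0 : Fin d → ℝ) 1 := by
    intro k
    rw [mem_sphere_zero_iff_norm]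
    show ‖‖w k‖⁻¹ • w k‖ = 1
    rw [norm_smul, norm_inv, norm_norm, inv_mul_cancel₀ (hwpos k).ne']
  have hymem : ∀ k, y k ∈ (fun x => (A ^ (m k)).mulVec x) '' K := by
    intro k
    refine ⟨‖w k‖⁻¹ • x k, hsmul _ (inv_pos.mpr (hwpos k)) _ (hx k), ?_⟩
    show (A ^ (m k)).mulVec (‖w k‖⁻¹ • x k) = y k
    rw [Matrix.mulVec_smul]
  obtain ⟨ylim, hylims, φ, hφ, hφt⟩ :=
    (isCompact_sphere (0 : Fin d → ℝ) 1).tendsto_subseq hysphere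
  have hylimmem : ∀ j : ℕ, ylim ∈ (fun x => (A ^ j).mulVec x) '' K := by
    intro j
    refine (hSclosed j).mem_of_tendsto hφt ?_
    filter_upwards [eventually_ge_atTop j] with k hk
    exact hsub (hk.trans (hφ.le_apply.trans (hm (φ k)))) (hymem (φ k))
  have hray : ylim ∈ {x : Fin d → ℝ | ∃ c : ℝ, 0 ≤ c ∧ x = c • v} := by
    rw [← hTS]; exact Set.mem_iInter.mpr hylimmem
  obtain ⟨c, hc0, hceq⟩ := hray
  have hcpos : 0 < c := by
    rcases hc0.lt_or_eq with h | h
    · exact h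
    · exfalso
      rw [← h, zero_smul] at hceq
      have := hylims
      rw [mem_sphere_zero_iff_norm, hceq] at this
      simp at this
  obtain ⟨i₀, hi₀⟩ := Finite.exists_infinite_fiber (fun k => i (φ k))
  have hfreq : ∃ᶠ k in atTop, i (φ k) = i₀ := by
    rw [Nat.frequently_atTop_iff_infinite]
    have := Set.infinite_coe_iff.mp hi₀
    simpa [Set.preimage, Set.mem_singleton_iff] using this
  have hylimi : ylim i₀ = c * v i₀ := by rw [hceq]; rfl
  rcases (hvnz i₀).lt_or_gt with hvi | hvi
  · -- v i₀ < 0, so frequently 0 < w k i₀, hence y values ≥ 0 at i₀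
    have hfreq2 : ∃ᶠ k in atTop, (y ∘ φ) k ∈ {z : Fin d → ℝ | 0 ≤ z i₀} := by
      refine hfreq.mono fun k hk => ?_
      rcases hbad (φ k) with ⟨h1, _⟩ | ⟨_, h2⟩
      · exact absurd (hk ▸ h1) (by intro hh; linarith)
      · show 0 ≤ y (φ k) i₀
        rw [← hk]
        show 0 ≤ (‖w (φ k)‖⁻¹ • w (φ k)) (i (φ k))
        rw [Pi.smul_apply, smul_eq_mul]
        exact mul_nonneg (inv_nonneg.mpr (norm_nonneg _)) h2.le
    have hcl : IsClosed {z : Fin d → ℝ | 0 ≤ z i₀} :=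
      isClosed_le continuous_const (continuous_apply i₀)
    have hmem : ylim ∈ {z : Fin d → ℝ | 0 ≤ z i₀} := by
      have := mem_closure_of_frequently_of_tendsto hfreq2 hφt
      rwa [hcl.closure_eq] at this
    have : 0 ≤ ylim i₀ := hmem
    rw [hylimi] at this
    nlinarith
  · -- 0 < v i₀, so frequently w k i₀ < 0, hence y values ≤ 0 at i₀
    have hfreq2 : ∃ᶠ k in atTop, (y ∘ φ) k ∈ {z : Fin d → ℝ | z i₀ ≤ 0} := by
      refine hfreq.mono fun k hk => ?_
      rcases hbad (φ k) with ⟨_, h2⟩ | ⟨h1, _⟩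
      · show y (φ k) i₀ ≤ 0
        rw [← hk]
        show (‖w (φ k)‖⁻¹ • w (φ k)) (i (φ k)) ≤ 0
        rw [Pi.smul_apply, smul_eq_mul]
        exact mul_nonpos_of_nonneg_of_nonpos (inv_nonneg.mpr (norm_nonneg _)) h2.le
      · exact absurd (hk ▸ h1) (by intro hh; linarith)
    have hcl : IsClosed {z : Fin d → ℝ | z i₀ ≤ 0} :=
      isClosed_le (continuous_apply i₀) continuous_const
    have hmem : ylim ∈ {z : Fin d → ℝ | z i₀ ≤ 0} := by
      have := mem_closure_of_frequently_of_tendsto hfreq2 hφt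
      rwa [hcl.closure_eq] at this
    have : ylim i₀ ≤ 0 := hmem
    rw [hylimi] at this
    nlinarith
end

section
/- Let V_{i,j} be a basis of R^d with A V_{1,1} = λ₁ V_{1,1} and A V_{i,j} = λ_i V_{i,j} + ε V_{i,j−1} (ε-perturbed Jordan structure), where λ₁ > 0 is simple and for each i ≠ 1 a sub-multiplicative norm N_i on C satisfies N_i(λ_i) < λ₁ and 0 < ε < λ₁ − N_i(λ_i). If W = Σ a_{i,j} V_{i,j} with a_{1,1} ≥ N_i(a_{i,j}) for all i ≥ 2 and j, and not all coefficients zero, then the coefficients α_{i,j} of AW satisfy α_{1,1} = λ₁ a_{1,1} > N_i(α_{i,j}) for all i ≥ 2 and j. -/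
/-- Key computation for the contraction of the polyhedral cone: if the
coefficients `a_{i,j}` of `W` satisfy `a_{1,1} ≥ N_i(a_{i,j})`, not all zero,
then the coefficients `α_{i,j}` of `AW` satisfy
`α_{1,1} = λ₁ a_{1,1} > N_i(α_{i,j})` for all `i ≠ 1`. -/
theorem stmt_10 (k : ℕ) (hk : 0 < k) (m : Fin k → ℕ) (hm0 : m ⟨0, hk⟩ = 1)
    (lam : Fin k → ℂ) (lam1 : ℝ) (hlam1 : lam ⟨0, hk⟩ = (lam1 : ℂ))
    (hlam1pos : 0 < lam1)
    (N : Fin k → ℂ → ℝ)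
    (hNnonneg : ∀ i z, 0 ≤ N i z)
    (hNdef : ∀ i z, N i z = 0 ↔ z = 0)
    (hNtri : ∀ i y z, N i (y + z) ≤ N i y + N i z)
    (hNhom : ∀ i (r : ℝ) z, N i ((r : ℂ) * z) = |r| * N i z)
    (hNmul : ∀ i y z, N i (y * z) ≤ N i y * N i z)
    (hNdom : ∀ i : Fin k, i ≠ ⟨0, hk⟩ → N i (lam i) < lam1)
    (ε : ℝ) (hε : 0 < ε)
    (hε2 : ∀ i : Fin k, i ≠ ⟨0, hk⟩ → ε < lam1 - N i (lam i))
    (a : (i : Fin k) → Fin (m i) → ℂ)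
    (ha11re : ∀ j0 : Fin (m ⟨0, hk⟩), (a ⟨0, hk⟩ j0).im = 0)
    (ha : ∀ (i : Fin k), i ≠ ⟨0, hk⟩ → ∀ (j : Fin (m i)) (j0 : Fin (m ⟨0, hk⟩)),
      N i (a i j) ≤ (a ⟨0, hk⟩ j0).re)
    (hnz : ∃ (i : Fin k) (j : Fin (m i)), a i j ≠ 0)
    (α : (i : Fin k) → Fin (m i) → ℂ)
    (hα : ∀ (i : Fin k) (j : Fin (m i)), α i j =
      lam i * a i j + if h : (j : ℕ) + 1 < m i then (ε : ℂ) * a i ⟨(j : ℕ) + 1, h⟩ else 0) :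
    (∀ j0 : Fin (m ⟨0, hk⟩), α ⟨0, hk⟩ j0 = (lam1 : ℂ) * a ⟨0, hk⟩ j0) ∧
    (∀ i : Fin k, i ≠ ⟨0, hk⟩ → ∀ (j : Fin (m i)) (j0 : Fin (m ⟨0, hk⟩)),
      N i (α i j) < (α ⟨0, hk⟩ j0).re) := by

  have hfirst : ∀ j0 : Fin (m ⟨0, hk⟩), α ⟨0, hk⟩ j0 = (lam1 : ℂ) * a ⟨0, hk⟩ j0 := by
    intro j0
    have hlt : (j0 : ℕ) < 1 := hm0 ▸ j0.isLt
    rw [hα, hlam1, dif_neg (by omega)]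
    ring
  refine ⟨hfirst, ?_⟩
  intro i hi j j0
  -- positivity of a11.re
  have hre_nonneg : 0 ≤ (a ⟨0, hk⟩ j0).re := le_trans (hNnonneg i (a i j)) (ha i hi j j0)
  have hre_pos : 0 < (a ⟨0, hk⟩ j0).re := by
    rcases hre_nonneg.lt_or_eq with h | h
    · exact h
    · exfalso
      obtain ⟨i', j', hne⟩ := hnz
      by_cases hi' : i' = ⟨0, hk⟩
      · subst hi'
        have : j' = j0 := by
          have h1 : m (⟨0, hk⟩ : Fin k) = 1 := hm0
          exact Fin.ext (by omega)
        apply hne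
        rw [this]
        exact Complex.ext (by simp [← h]) (by simp [ha11re j0])
      · have h1 : N i' (a i' j') ≤ 0 := by
          have := ha i' hi' j' j0; linarith
        have h2 : N i' (a i' j') = 0 := le_antisymm h1 (hNnonneg _ _)
        exact hne ((hNdef i' _).mp h2)
  have hαre : (α ⟨0, hk⟩ j0).re = lam1 * (a ⟨0, hk⟩ j0).re := by
    rw [hfirst j0]
    simp [Complex.mul_re]
  rw [hαre]
  have hNlam : 0 ≤ N i (lam i) := hNnonneg _ _
  have hb1 : N i (lam i * a i j) ≤ N i (lam i) * (a ⟨0, hk⟩ j0).re :=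
    le_trans (hNmul i _ _) (mul_le_mul_of_nonneg_left (ha i hi j j0) hNlam)
  have hκ : N i (lam i) + ε < lam1 := by have := hε2 i hi; linarith
  rw [hα]
  by_cases h : (j : ℕ) + 1 < m i
  · rw [dif_pos h]
    have hb2 : N i ((ε : ℂ) * a i ⟨(j : ℕ) + 1, h⟩) ≤ ε * (a ⟨0, hk⟩ j0).re := by
      rw [hNhom, abs_of_pos hε]
      exact mul_le_mul_of_nonneg_left (ha i hi _ j0) hε.le
    calc N i (lam i * a i j + (ε : ℂ) * a i ⟨(j : ℕ) + 1, h⟩)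
        ≤ N i (lam i * a i j) + N i ((ε : ℂ) * a i ⟨(j : ℕ) + 1, h⟩) := hNtri i _ _
      _ ≤ (N i (lam i) + ε) * (a ⟨0, hk⟩ j0).re := by rw [add_mul]; linarith
      _ < lam1 * (a ⟨0, hk⟩ j0).re := by
          exact mul_lt_mul_of_pos_right hκ hre_pos
  · rw [dif_neg h, add_zero]
    have : N i (lam i) * (a ⟨0, hk⟩ j0).re < lam1 * (a ⟨0, hk⟩ j0).re := by
      have hlt : N i (lam i) < lam1 := hNdom i hi
      exact mul_lt_mul_of_pos_right hlt hre_pos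
    linarith
end

section
/- Let the sequence (u_n) satisfy a linear recurrence of order d with companion matrices A(n), and suppose K is a cone contained in R^{d−1} × R_{≥0} with A(n) K ⊆ K for all n ≥ m. If U_{n₀} ∈ K for some n₀ ≥ m and u_0, …, u_{n₀+d−2} ≥ 0, then u_n ≥ 0 for all n. -/
/-- Larger cones: if `K ⊆ ℝ^{d-1} × ℝ₊` is stable under the companion
matrices `A(n)` for `n ≥ m`, `U_{n₀} ∈ K` for some `n₀ ≥ m`, and
`u_0, …, u_{n₀+d-2} ≥ 0`, then `u_n ≥ 0` for all `n`. -/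
theorem stmt_12 (d : ℕ) (hd : 0 < d) (u : ℕ → ℝ)
    (A : ℕ → Matrix (Fin d) (Fin d) ℝ)
    (hU : ∀ n : ℕ, (fun i : Fin d => u (n + 1 + (i : ℕ))) =
      (A n).mulVec (fun i : Fin d => u (n + (i : ℕ))))
    (K : Set (Fin d → ℝ))
    (hKlast : ∀ x ∈ K, 0 ≤ x ⟨d - 1, Nat.sub_lt hd one_pos⟩)
    (m : ℕ) (hstab : ∀ n ≥ m, ∀ x ∈ K, (A n).mulVec x ∈ K)
    (n₀ : ℕ) (hn₀ : m ≤ n₀)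
    (hmem : (fun i : Fin d => u (n₀ + (i : ℕ))) ∈ K)
    (hinit : ∀ i ≤ n₀ + d - 2, 0 ≤ u i) :
    ∀ n, 0 ≤ u n := by
  have key : ∀ k, (fun i : Fin d => u (n₀ + k + (i : ℕ))) ∈ K := by
    intro k
    induction k with
    | zero => simpa using hmem
    | succ k ih =>
      have := hstab (n₀ + k) (le_trans hn₀ (Nat.le_add_right _ _)) _ ih
      rw [← hU (n₀ + k)] at this
      exact this
  intro n
  by_cases h : n ≤ n₀ + d - 2
  · exact hinit n h
  · push_neg at h
    have hn : n₀ + d - 1 ≤ n := by omega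
    have hk : ∃ k, n = n₀ + k + (d - 1) := ⟨n - (n₀ + d - 1), by omega⟩
    obtain ⟨k, rfl⟩ := hk
    have := hKlast _ (key k)
    simpa using this
end

section
/- Let A be a real d×d matrix with a unique simple positive dominant eigenvalue λ and associated eigenvector V, and let W be an eigenvector of the transpose of A for λ with ⟨W, U₀⟩ ≠ 0. If the power iteration U_{n+1} = A U_n starts at U₀, then there exist signs ε_n ∈ {−1,1} and c ≠ 0 such that ε_n U_n/‖U_n‖ → cV as n → ∞. -/
open Polynomial Filter Matrix

-- Lemma A: recurrence
lemma lemA (a : ℕ → ℝ) (ha : ∀ n, 0 ≤ a n) (k : ℝ) (hk0 : 0 ≤ k) (hk1 : k < 1)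
    (c : ℕ → ℝ) (hc : Tendsto c atTop (nhds 0))
    (hrec : ∀ n, a (n + 1) ≤ k * a n + c n) :
    Tendsto a atTop (nhds 0) := by
  rw [Metric.tendsto_atTop]
  intro ε hε
  have hk1' : 0 < 1 - k := by linarith
  have hD : 0 < (1 - k) * ε / 2 := by positivity
  obtain ⟨N, hN⟩ := (Metric.tendsto_atTop.mp hc) _ hD
  have key : ∀ m, a (N + m) ≤ k ^ m * a N + ε / 2 := by
    intro m
    induction m with
    | zero => simp only [Nat.add_zero, pow_zero, one_mul]; linarith [ha N, hε]
    | succ m ih =>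
      have h1 : a (N + m + 1) ≤ k * a (N + m) + c (N + m) := hrec _
      have h2 : c (N + m) ≤ (1 - k) * ε / 2 := by
        have := hN (N + m) (by omega)
        rw [Real.dist_eq, sub_zero] at this
        exact (abs_le.mp this.le).2
      have h3 : k * a (N + m) ≤ k * (k ^ m * a N + ε / 2) :=
        mul_le_mul_of_nonneg_left ih hk0
      have : a (N + (m + 1)) ≤ k * (k ^ m * a N + ε / 2) + (1 - k) * ε / 2 := by
        calc a (N + (m + 1)) = a (N + m + 1) := by ring_nf
        _ ≤ k * a (N + m) + c (N + m) := h1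
        _ ≤ _ := by linarith
      calc a (N + (m + 1)) ≤ k * (k ^ m * a N + ε / 2) + (1 - k) * ε / 2 := this
      _ = k ^ (m + 1) * a N + (k * ε / 2 + (1 - k) * ε / 2) := by ring
      _ ≤ k ^ (m + 1) * a N + ε / 2 := by nlinarith
  have hpow : Tendsto (fun m => k ^ m * a N) atTop (nhds 0) := by
    simpa using (tendsto_pow_atTop_nhds_zero_of_lt_one hk0 hk1).mul_const (a N)
  obtain ⟨M, hM⟩ := (Metric.tendsto_atTop.mp hpow) (ε / 2) (by positivity)
  refine ⟨N + M, fun n hn => ?_⟩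
  have h1 : a n ≤ k ^ (n - N) * a N + ε / 2 := by
    have := key (n - N); rwa [Nat.add_sub_cancel' (by omega)] at this
  have h2 : k ^ (n - N) * a N < ε / 2 := by
    have := hM (n - N) (by omega)
    rw [Real.dist_eq, sub_zero] at this
    exact (abs_lt.mp this).2
  rw [Real.dist_eq, sub_zero, abs_of_nonneg (ha n)]
  linarith

lemma lemB {d : ℕ} (M : Matrix (Fin d) (Fin d) ℂ) (lam : ℝ) (hlam : 0 < lam) :
    ∀ N : ℕ, ∀ p : ℂ[X], p ≠ 0 → p.natDegree ≤ N →
      (∀ μ ∈ p.roots, ‖μ‖ < lam) →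
      ∀ x : Fin d → ℂ, (Polynomial.aeval M p).mulVec x = 0 →
      Tendsto (fun n => ((lam : ℂ) ^ n)⁻¹ • (M ^ n).mulVec x) atTop (nhds 0) := by
  intro N
  induction N with
  | zero =>
    intro p hp0 hdeg _ x hx
    have hpC : p = C (p.coeff 0) := p.eq_C_of_natDegree_le_zero hdeg
    have hc0 : p.coeff 0 ≠ 0 := by
      intro h; apply hp0; rw [hpC, h, map_zero]
    have hx0 : x = 0 := by
      have : (Polynomial.aeval M p) = p.coeff 0 • (1 : Matrix (Fin d) (Fin d) ℂ) := by
        rw [hpC]; simp [Polynomial.aeval_C, Algebra.algebraMap_eq_smul_one]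
      rw [this, smul_mulVec, one_mulVec] at hx
      exact (smul_eq_zero.mp hx).resolve_left hc0
    simp [hx0]
  | succ N IH =>
    intro p hp0 hdeg hroots x hx
    by_cases hdN : p.natDegree ≤ N
    · exact IH p hp0 hdN hroots x hx
    have hdpos : 0 < p.degree := natDegree_pos_iff_degree_pos.mp (by omega)
    obtain ⟨μ, hroot⟩ := Complex.exists_root hdpos
    have hμ : ‖μ‖ < lam := hroots μ (mem_roots'.mpr ⟨hp0, hroot⟩)
    obtain ⟨p₁, hp₁⟩ := (dvd_iff_isRoot.mpr hroot)
    have hXC : (X - C μ : ℂ[X]) ≠ 0 := X_sub_C_ne_zero μ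
    have hp₁0 : p₁ ≠ 0 := by rintro rfl; rw [mul_zero] at hp₁; exact hp0 hp₁
    have hdeg₁ : p₁.natDegree ≤ N := by
      have := natDegree_mul hXC hp₁0
      rw [← hp₁, natDegree_X_sub_C] at this
      omega
    have hroots₁ : ∀ μ' ∈ p₁.roots, ‖μ'‖ < lam := by
      intro μ' hμ'
      apply hroots
      rw [hp₁, roots_mul (hp₁ ▸ hp0)]
      exact Multiset.mem_add.mpr (Or.inr hμ')
    set y := M.mulVec x - μ • x with hy_def
    have hyaev : (Polynomial.aeval M p₁).mulVec y = 0 := by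
      have hfac : Polynomial.aeval M p = Polynomial.aeval M p₁ * (M - μ • 1) := by
        rw [hp₁, mul_comm (X - C μ), _root_.map_mul]
        congr 1
        simp [Algebra.algebraMap_eq_smul_one]
      have : (M - μ • 1).mulVec x = y := by
        rw [sub_mulVec, smul_mulVec, one_mulVec]
      rw [← this, mulVec_mulVec, ← hfac, hx]
    have hb := IH p₁ hp₁0 hdeg₁ hroots₁ y hyaev
    set b : ℕ → Fin d → ℂ := fun n => ((lam : ℂ) ^ n)⁻¹ • (M ^ n).mulVec y with hb_def
    set a : ℕ → Fin d → ℂ := fun n => ((lam : ℂ) ^ n)⁻¹ • (M ^ n).mulVec x with ha_def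
    have hnorm : ∀ (n : ℕ) (v : Fin d → ℂ),
        ‖((lam : ℂ) ^ n)⁻¹ • v‖ = (lam ^ n)⁻¹ * ‖v‖ := by
      intro n v
      rw [norm_smul, norm_inv, norm_pow, Complex.norm_real,
        Real.norm_of_nonneg hlam.le]
    have hlamn : ∀ n : ℕ, (0:ℝ) < lam ^ n := fun n => pow_pos hlam n
    have hrec : ∀ n, ‖a (n + 1)‖ ≤ (‖μ‖ / lam) * ‖a n‖ + lam⁻¹ * ‖b n‖ := by
      intro n
      have hstep : (M ^ (n + 1)).mulVec x
          = μ • (M ^ n).mulVec x + (M ^ n).mulVec y := by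
        rw [pow_succ, ← mulVec_mulVec]
        have : M.mulVec x = μ • x + y := by rw [hy_def]; abel
        rw [this]
        simp [mulVec_add, mulVec_smul]
      have e1 : ‖a (n + 1)‖ = (lam ^ (n+1))⁻¹ * ‖μ • (M ^ n).mulVec x + (M ^ n).mulVec y‖ := by
        rw [ha_def]; simp only []
        rw [hstep, hnorm]
      have e2 : ‖μ • (M ^ n).mulVec x + (M ^ n).mulVec y‖
          ≤ ‖μ‖ * ‖(M ^ n).mulVec x‖ + ‖(M ^ n).mulVec y‖ := by
        refine (norm_add_le _ _).trans ?_
        rw [norm_smul]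
      have e3 : ‖(M ^ n).mulVec x‖ = lam ^ n * ‖a n‖ := by
        rw [ha_def]; simp only []
        rw [hnorm, ← mul_assoc, mul_inv_cancel₀ (hlamn n).ne', one_mul]
      have e4 : ‖(M ^ n).mulVec y‖ = lam ^ n * ‖b n‖ := by
        rw [hb_def]; simp only []
        rw [hnorm, ← mul_assoc, mul_inv_cancel₀ (hlamn n).ne', one_mul]
      calc ‖a (n + 1)‖ ≤ (lam ^ (n+1))⁻¹ * (‖μ‖ * (lam ^ n * ‖a n‖) + lam ^ n * ‖b n‖) := by
            rw [e1, ← e3, ← e4]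
            exact mul_le_mul_of_nonneg_left e2 (by positivity)
      _ = (‖μ‖ / lam) * ‖a n‖ + lam⁻¹ * ‖b n‖ := by
            field_simp
            ring
    have hbnorm : Tendsto (fun n => lam⁻¹ * ‖b n‖) atTop (nhds 0) := by
      have := hb.norm
      rw [norm_zero] at this
      simpa using this.const_mul lam⁻¹
    have := lemA (fun n => ‖a n‖) (fun n => norm_nonneg _) (‖μ‖ / lam)
      (by positivity) ((div_lt_one hlam).mpr hμ) _ hbnorm hrec
    exact tendsto_zero_iff_norm_tendsto_zero.mpr this

lemma charpoly_shift {d : ℕ} (B : Matrix (Fin d) (Fin d) ℝ) (t : ℝ) :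
    (B - t • 1).charpoly = B.charpoly.comp (X + C t) := by
  let φ : ℝ[X] →+* ℝ[X] := eval₂RingHom C (X + C t)
  have hmat : (charmatrix B).map φ = charmatrix (B - t • 1) := by
    ext i j
    by_cases h : i = j
    · subst h
      rw [Matrix.map_apply, charmatrix_apply_eq, charmatrix_apply_eq]
      have h1 : φ (X - C (B i i)) = X + C t - C (B i i) := by
        simp [φ]
      rw [h1, Matrix.sub_apply, Matrix.smul_apply, Matrix.one_apply_eq, smul_eq_mul, mul_one,
        map_sub]
      ring
    · rw [Matrix.map_apply, charmatrix_apply_ne _ _ _ h, charmatrix_apply_ne _ _ _ h]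
      have h1 : φ (-C (B i j)) = -C (B i j) := by simp [φ]
      rw [h1, Matrix.sub_apply, Matrix.smul_apply, Matrix.one_apply_ne h, smul_eq_mul, mul_zero,
        sub_zero]
  calc (B - t • 1).charpoly = ((charmatrix B).map φ).det := by
        rw [hmat]; rfl
  _ = φ (charmatrix B).det := (RingHom.map_det φ _).symm
  _ = B.charpoly.comp (X + C t) := rfl

lemma aeval_eigen {d : ℕ} (B : Matrix (Fin d) (Fin d) ℝ) (w : Fin d → ℝ) (μ : ℝ)
    (hw : B.mulVec w = μ • w) (p : ℝ[X]) :
    (Polynomial.aeval B p).mulVec w = p.eval μ • w := by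
  have hpow : ∀ n : ℕ, (B ^ n).mulVec w = μ ^ n • w := by
    intro n
    induction n with
    | zero => simp [one_mulVec]
    | succ n ih =>
      rw [pow_succ, ← mulVec_mulVec, hw, mulVec_smul, ih, smul_smul, pow_succ]
      ring_nf
  induction p using Polynomial.induction_on' with
  | add p q hp hq => rw [map_add, add_mulVec, hp, hq, eval_add, add_smul]
  | monomial n a =>
    rw [aeval_monomial, eval_monomial, Algebra.algebraMap_eq_smul_one, smul_one_mul,
      smul_mulVec, hpow, smul_smul]

lemma aeval_transpose {d : ℕ} (B : Matrix (Fin d) (Fin d) ℝ) (p : ℝ[X]) :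
    (Polynomial.aeval B p)ᵀ = Polynomial.aeval Bᵀ p := by
  induction p using Polynomial.induction_on' with
  | add p q hp hq => rw [map_add, Matrix.transpose_add, hp, hq, map_add]
  | monomial n a =>
    rw [aeval_monomial, aeval_monomial]
    simp [Algebra.algebraMap_eq_smul_one, smul_one_mul, Matrix.transpose_smul, transpose_pow]

lemma mulVec_cmap {d : ℕ} (B : Matrix (Fin d) (Fin d) ℝ) (v : Fin d → ℝ) :
    (B.map (Complex.ofReal)).mulVec (fun i => (v i : ℂ)) = fun i => ((B.mulVec v) i : ℂ) := by
  ext i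
  simp only [Matrix.mulVec, dotProduct, Matrix.map_apply]
  push_cast
  rfl

lemma pow_cmap {d : ℕ} (B : Matrix (Fin d) (Fin d) ℝ) (n : ℕ) :
    (B.map (Complex.ofReal)) ^ n = (B ^ n).map Complex.ofReal := by
  have h1 : (B.map Complex.ofReal) = Complex.ofRealAm.mapMatrix (m := Fin d) B := rfl
  rw [h1, ← map_pow]
  rfl

lemma aeval_cmap {d : ℕ} (B : Matrix (Fin d) (Fin d) ℝ) (p : ℝ[X]) :
    Polynomial.aeval (B.map (Complex.ofReal)) (p.map Complex.ofRealHom)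
      = (Polynomial.aeval B p).map Complex.ofReal := by
  have h1 : (B.map Complex.ofReal) = Complex.ofRealAm.mapMatrix (m := Fin d) B := rfl
  rw [show Complex.ofRealHom = algebraMap ℝ ℂ from rfl, aeval_map_algebraMap, h1,
    aeval_algHom_apply]
  rfl

/-- Power method: if `A` has a unique simple positive dominant eigenvalue `λ`
with eigenvector `V`, `W` is an eigenvector of `Aᵀ` for `λ`, and
`⟨W, U₀⟩ ≠ 0`, then the normalized iterates `U_n = A^n U₀` converge in
direction (up to signs) to a nonzero multiple of `V`. -/

theorem stmt_13 (d : ℕ) (A : Matrix (Fin d) (Fin d) ℝ)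
    (lam : ℝ) (hlampos : 0 < lam)
    (hsimple : ((A.map (Complex.ofReal)).charpoly.roots.count (lam : ℂ)) = 1)
    (hdom : ∀ μ ∈ (A.map (Complex.ofReal)).charpoly.roots,
      μ ≠ (lam : ℂ) → ‖μ‖ < lam)
    (V : Fin d → ℝ) (hV : V ≠ 0) (heig : A.mulVec V = lam • V)
    (W : Fin d → ℝ) (hW : W ≠ 0) (heigT : A.transpose.mulVec W = lam • W)
    (U₀ : Fin d → ℝ) (hgen : dotProduct W U₀ ≠ 0)
    (U : ℕ → (Fin d → ℝ)) (hUdef : ∀ n, U n = (A ^ n).mulVec U₀) :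
    ∃ eps : ℕ → ℝ, (∀ n, eps n = 1 ∨ eps n = -1) ∧
      ∃ c : ℝ, c ≠ 0 ∧
        Tendsto (fun n => eps n • ((‖U n‖)⁻¹ • U n)) atTop (nhds (c • V)) := by
  classical
  set pR : ℝ[X] := A.charpoly with hpR_def
  have hpR0 : pR ≠ 0 := A.charpoly_monic.ne_zero
  have hmapc : (A.map (Complex.ofReal)).charpoly = pR.map Complex.ofRealHom :=
    Matrix.charpoly_map A Complex.ofRealHom
  have hpC0 : pR.map Complex.ofRealHom ≠ 0 :=
    Polynomial.map_ne_zero_iff Complex.ofReal_injective |>.mpr hpR0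
  rw [hmapc] at hsimple hdom
  -- lam is a root of pR
  have hrootC : IsRoot (pR.map Complex.ofRealHom) (lam : ℂ) := by
    have : (lam : ℂ) ∈ (pR.map Complex.ofRealHom).roots := by
      rw [← Multiset.count_pos, hsimple]; norm_num
    exact (mem_roots hpC0).mp this
  have hrootR : pR.IsRoot lam := by
    have := hrootC
    rw [IsRoot, eval_map, show ((lam : ℂ)) = Complex.ofRealHom lam from rfl,
      Polynomial.eval₂_at_apply] at this
    simpa using this
  obtain ⟨qR, hfac⟩ := Polynomial.dvd_iff_isRoot.mpr hrootR
  have hqR0 : qR ≠ 0 := by rintro rfl; rw [mul_zero] at hfac; exact hpR0 hfac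
  have hmult1 : rootMultiplicity (lam : ℂ) (pR.map Complex.ofRealHom) = 1 := by
    rw [← Polynomial.count_roots]; exact hsimple
  -- map of factorization
  have hfacC : pR.map Complex.ofRealHom
      = (X - C (lam : ℂ)) * qR.map Complex.ofRealHom := by
    rw [hfac, Polynomial.map_mul, Polynomial.map_sub, Polynomial.map_X, Polynomial.map_C]
    rfl
  have hqC0 : qR.map Complex.ofRealHom ≠ 0 :=
    Polynomial.map_ne_zero_iff Complex.ofReal_injective |>.mpr hqR0
  -- qR.eval lam ≠ 0
  have hqlam : qR.eval lam ≠ 0 := by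
    intro h
    obtain ⟨q2, hq2⟩ := Polynomial.dvd_iff_isRoot.mpr h
    have hdvd : (X - C (lam : ℂ)) ^ 2 ∣ pR.map Complex.ofRealHom := by
      rw [hfacC, hq2, Polynomial.map_mul, Polynomial.map_sub, Polynomial.map_X,
        Polynomial.map_C, sq]
      exact mul_dvd_mul_left _ (Dvd.intro _ rfl)
    have := (Polynomial.le_rootMultiplicity_iff hpC0).mpr hdvd
    omega
  -- roots of qR map have modulus < lam
  have hqroots : ∀ μ ∈ (qR.map Complex.ofRealHom).roots, ‖μ‖ < lam := by
    intro μ hμ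
    have hmemp : μ ∈ (pR.map Complex.ofRealHom).roots := by
      rw [hfacC, roots_mul (hfacC ▸ hpC0)]
      exact Multiset.mem_add.mpr (Or.inr hμ)
    have hne : μ ≠ (lam : ℂ) := by
      intro heq
      rw [heq] at hμ
      have hcount : (1 : ℕ) ≤ ((qR.map Complex.ofRealHom).roots).count (lam : ℂ) :=
        Multiset.one_le_count_iff_mem.mpr hμ
      have hsum : ((pR.map Complex.ofRealHom).roots).count (lam : ℂ)
          = ((X - C (lam : ℂ) : ℂ[X]).roots).count (lam : ℂ)
            + ((qR.map Complex.ofRealHom).roots).count (lam : ℂ) := by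
        rw [hfacC, roots_mul (hfacC ▸ hpC0), Multiset.count_add]
      rw [hsimple, Polynomial.roots_X_sub_C, Multiset.count_singleton_self] at hsum
      omega
    exact hdom μ hmemp hne
  -- geometric multiplicity ≤ 1
  have hgeom : ∀ u : Fin d → ℝ, A.mulVec u = lam • u → ∃ t : ℝ, u = t • V := by
    intro u hu
    set φ : Module.End ℝ (Fin d → ℝ) := Matrix.toLin' (A - lam • 1) with hφ_def
    have hφapp : ∀ v : Fin d → ℝ, φ v = A.mulVec v - lam • v := by
      intro v
      rw [hφ_def, Matrix.toLin'_apply, sub_mulVec, smul_mulVec, one_mulVec]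
    have hmem : ∀ v : Fin d → ℝ, A.mulVec v = lam • v → v ∈ φ.maxGenEigenspace (0 : ℝ) := by
      intro v hv
      rw [Module.End.mem_maxGenEigenspace]
      exact ⟨1, by rw [zero_smul, sub_zero, pow_one, hφapp, hv, sub_self]⟩
    have hfr : Module.finrank ℝ (φ.maxGenEigenspace (0 : ℝ)) ≤ 1 := by
      rw [LinearMap.finrank_maxGenEigenspace_zero_eq]
      have hch : φ.charpoly = (A - lam • 1).charpoly := by
        rw [← LinearMap.charpoly_toMatrix φ (Pi.basisFun ℝ (Fin d)),
          LinearMap.toMatrix_eq_toMatrix', hφ_def, LinearMap.toMatrix'_toLin']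
      rw [hch, charpoly_shift, ← rootMultiplicity_eq_natTrailingDegree]
      show rootMultiplicity lam pR ≤ 1
      have hdvd : (X - C lam) ^ (rootMultiplicity lam pR) ∣ pR :=
        pow_rootMultiplicity_dvd pR lam
      have hdvdC : (X - C (lam : ℂ)) ^ (rootMultiplicity lam pR)
          ∣ pR.map Complex.ofRealHom := by
        have h5 := map_dvd (Polynomial.mapRingHom Complex.ofRealHom) hdvd
        simp only [Polynomial.coe_mapRingHom] at h5
        rw [Polynomial.map_pow, Polynomial.map_sub, Polynomial.map_X,
          Polynomial.map_C] at h5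
        exact h5
      have hle := (Polynomial.le_rootMultiplicity_iff hpC0).mpr hdvdC
      rw [hmult1] at hle
      exact hle
    obtain ⟨g, hg⟩ := finrank_le_one_iff.mp hfr
    obtain ⟨c₁, hc₁⟩ := hg ⟨V, hmem V heig⟩
    obtain ⟨c₂, hc₂⟩ := hg ⟨u, hmem u hu⟩
    have e1 : c₁ • (g : Fin d → ℝ) = V := congrArg Subtype.val hc₁
    have e2 : c₂ • (g : Fin d → ℝ) = u := congrArg Subtype.val hc₂
    have hc₁0 : c₁ ≠ 0 := by rintro rfl; exact hV (by rw [← e1, zero_smul])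
    refine ⟨c₂ / c₁, ?_⟩
    rw [← e1, ← e2, smul_smul, div_mul_cancel₀ _ hc₁0]
  -- the projection z
  set Q : Matrix (Fin d) (Fin d) ℝ := Polynomial.aeval A qR with hQ_def
  set z : Fin d → ℝ := Q.mulVec U₀ with hz_def
  have hAz : A.mulVec z = lam • z := by
    have h0 : Polynomial.aeval A pR = 0 := Matrix.aeval_self_charpoly A
    have hAQ : A * Q = lam • Q := by
      have h1 : (A - lam • 1) * Q = 0 := by
        have : Polynomial.aeval A pR = (A - lam • 1) * Q := by
          rw [hfac, _root_.map_mul, hQ_def]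
          congr 1
          simp [Algebra.algebraMap_eq_smul_one]
        rw [← this, h0]
      have h2 : A * Q - lam • Q = (A - lam • 1) * Q := by
        rw [sub_mul, smul_mul_assoc, one_mul]
      have h3 : A * Q - lam • Q = 0 := by rw [h2, h1]
      exact sub_eq_zero.mp h3
    rw [hz_def, mulVec_mulVec, hAQ, smul_mulVec]
  obtain ⟨t, htz⟩ := hgeom z hAz
  -- W ⬝ᵥ z ≠ 0, hence t ≠ 0
  have hWz : W ⬝ᵥ z = qR.eval lam * (W ⬝ᵥ U₀) := by
    rw [hz_def, dotProduct_mulVec, ← mulVec_transpose, hQ_def, aeval_transpose,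
      aeval_eigen Aᵀ W lam heigT, smul_dotProduct, smul_eq_mul]
  have ht0 : t ≠ 0 := by
    rintro rfl
    rw [zero_smul] at htz
    rw [htz] at hWz
    simp only [dotProduct_zero] at hWz
    exact mul_ne_zero hqlam hgen hWz.symm
  set α : ℝ := t / qR.eval lam with hα_def
  have hα0 : α ≠ 0 := div_ne_zero ht0 hqlam
  set x : Fin d → ℝ := U₀ - α • V with hx_def
  have hqx : Q.mulVec x = 0 := by
    rw [hx_def, sub_eq_add_neg, mulVec_add, mulVec_neg, mulVec_smul, hQ_def,
      aeval_eigen A V lam heig, ← hQ_def, ← hz_def, htz, smul_smul, hα_def,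
      div_mul_cancel₀ _ hqlam, add_neg_cancel]
  -- the stable part tends to zero
  have hxlim : Tendsto (fun n => (lam ^ n)⁻¹ • (A ^ n).mulVec x) atTop (nhds 0) := by
    set MC := A.map Complex.ofReal with hMC
    set xC : Fin d → ℂ := fun i => (x i : ℂ) with hxC
    have hxCz : (Polynomial.aeval MC (qR.map Complex.ofRealHom)).mulVec xC = 0 := by
      rw [hMC, aeval_cmap, hxC, mulVec_cmap, ← hQ_def, hqx]
      ext i
      simp
    have hten := lemB MC lam hlampos (qR.map Complex.ofRealHom).natDegree
      (qR.map Complex.ofRealHom) hqC0 le_rfl hqroots xC hxCz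
    have hterm : ∀ n, ((lam : ℂ) ^ n)⁻¹ • (MC ^ n).mulVec xC
        = fun i => ((((lam ^ n)⁻¹ • (A ^ n).mulVec x) i : ℝ) : ℂ) := by
      intro n
      rw [hMC, pow_cmap, hxC, mulVec_cmap]
      ext i
      simp only [Pi.smul_apply, smul_eq_mul]
      push_cast
      ring
    rw [tendsto_pi_nhds]
    intro i
    have hcoord : Tendsto (fun n => ((((lam ^ n)⁻¹ • (A ^ n).mulVec x) i : ℝ) : ℂ))
        atTop (nhds 0) := by
      have h6 := hten
      rw [tendsto_pi_nhds] at h6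
      have h7 := h6 i
      simp only [hterm] at h7
      simpa using h7
    have h8 : Tendsto (fun n => (((lam ^ n)⁻¹ • (A ^ n).mulVec x) i)) atTop (nhds 0) := by
      have h9 := (Complex.continuous_re.tendsto 0).comp hcoord
      simp only [Function.comp_def, Complex.ofReal_re, Complex.zero_re] at h9
      exact h9
    simpa using h8
  -- λ⁻ⁿ Uₙ → α V
  have hAV : ∀ n : ℕ, (A ^ n).mulVec V = lam ^ n • V := by
    intro n
    have := aeval_eigen A V lam heig (X ^ n : ℝ[X])
    simpa using this
  have hUlim : Tendsto (fun n => (lam ^ n)⁻¹ • U n) atTop (nhds (α • V)) := by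
    have hdecomp : ∀ n, (lam ^ n)⁻¹ • U n = α • V + (lam ^ n)⁻¹ • (A ^ n).mulVec x := by
      intro n
      have hU₀ : U₀ = α • V + x := by rw [hx_def]; abel
      rw [hUdef n, hU₀, mulVec_add, mulVec_smul, hAV n, smul_add, smul_smul, smul_smul]
      have hsc : (lam ^ n)⁻¹ * α * lam ^ n = α := by
        field_simp
      rw [hsc]
    rw [funext hdecomp]
    simpa using tendsto_const_nhds.add hxlim
  -- normalize
  set L : Fin d → ℝ := α • V with hL_def
  have hL0 : L ≠ 0 := smul_ne_zero hα0 hV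
  have hnL0 : ‖L‖ ≠ 0 := norm_ne_zero_iff.mpr hL0
  have hnorm_lim : Tendsto (fun n => ‖(lam ^ n)⁻¹ • U n‖) atTop (nhds ‖L‖) := hUlim.norm
  have hfin : Tendsto (fun n => ‖(lam ^ n)⁻¹ • U n‖⁻¹ • ((lam ^ n)⁻¹ • U n)) atTop
      (nhds (‖L‖⁻¹ • L)) := (hnorm_lim.inv₀ hnL0).smul hUlim
  have hsim : ∀ n, ‖(lam ^ n)⁻¹ • U n‖⁻¹ • ((lam ^ n)⁻¹ • U n) = ‖U n‖⁻¹ • U n := by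
    intro n
    have hp : (0:ℝ) < lam ^ n := pow_pos hlampos n
    rw [norm_smul, Real.norm_eq_abs, abs_of_pos (inv_pos.mpr hp), mul_inv, inv_inv,
      smul_smul]
    congr 1
    rw [mul_comm (lam ^ n), mul_assoc, mul_inv_cancel₀ hp.ne', mul_one]
  refine ⟨fun _ => 1, fun n => Or.inl rfl, ‖L‖⁻¹ * α,
    mul_ne_zero (inv_ne_zero hnL0) hα0, ?_⟩
  have hLc : ‖L‖⁻¹ • L = (‖L‖⁻¹ * α) • V := by rw [hL_def, smul_smul]
  simp only [one_smul]
  rw [← hLc, ← funext hsim]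
  exact hfin
end

section
/- Let λ₁ > |λ₂| ≥ … be the eigenvalue moduli of a real matrix A with λ₁ simple, and let K(V_{i,j}) be Vandergraft's cone built from an ε-Jordan basis with 0 < ε < λ₁ − |λ₂|: K = { a_{1,1} V_{1,1} + Σ_{i≥2,j} a_{i,j} V_{i,j} : a_{1,1} ≥ |a_{i,j}| for all i,j, conjugate-symmetric coefficients }. Then K is a proper cone (closed, pointed, solid) and A contracts K. -/
open Complex

/-- Vandergraft's cone `K(V_{i,j})`, built from an ε-Jordan basis with
`0 < ε < λ₁ - |λ₂|`, is a proper cone contracted by `A`. -/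
theorem stmt_14 (d k : ℕ) (hk : 0 < k) (m : Fin k → ℕ) (hm0 : m ⟨0, hk⟩ = 1)
    (hcard : ∑ i, m i = d)
    (A : Matrix (Fin d) (Fin d) ℝ)
    (lam : Fin k → ℂ) (lam1 : ℝ) (hlam1 : lam ⟨0, hk⟩ = (lam1 : ℂ)) (hlam1pos : 0 < lam1)
    (hdom : ∀ i : Fin k, i ≠ ⟨0, hk⟩ → ‖lam i‖ < lam1)
    (ε : ℝ) (hε : 0 < ε)
    (hε2 : ∀ i : Fin k, i ≠ ⟨0, hk⟩ → ε < lam1 - ‖lam i‖)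
    (V : (i : Fin k) → Fin (m i) → (Fin d → ℂ))
    (hbasis : LinearIndependent ℂ (fun p : Σ i : Fin k, Fin (m i) => V p.1 p.2))
    (hAV : ∀ (i : Fin k) (j : Fin (m i)),
      (A.map (Complex.ofReal)).mulVec (V i j) =
        lam i • V i j +
          if h : (j : ℕ) = 0 then 0
          else (ε : ℂ) • V i ⟨(j : ℕ) - 1, lt_of_le_of_lt (Nat.sub_le _ _) j.isLt⟩)
    (σ : Fin k → Fin k) (hσm : ∀ i, m (σ i) = m i)
    (hσlam : ∀ i, lam (σ i) = (starRingEnd ℂ) (lam i))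
    (hσV : ∀ (i : Fin k) (j : Fin (m i)),
      V (σ i) (Fin.cast (hσm i).symm j) = fun t => (starRingEnd ℂ) (V i j t))
    (K : Set (Fin d → ℝ))
    (hK : K = {x : Fin d → ℝ | ∃ a : (i : Fin k) → Fin (m i) → ℂ,
      (∀ (i : Fin k) (j : Fin (m i)),
        a (σ i) (Fin.cast (hσm i).symm j) = (starRingEnd ℂ) (a i j)) ∧
      (∀ (i : Fin k) (j : Fin (m i)) (j0 : Fin (m ⟨0, hk⟩)),
        ‖a i j‖ ≤ (a ⟨0, hk⟩ j0).re) ∧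
      (∀ t : Fin d, (x t : ℂ) = ∑ i : Fin k, ∑ j : Fin (m i), a i j * V i j t)}) :
    (∀ x ∈ K, ∀ y ∈ K, x + y ∈ K) ∧
    (∀ (c : ℝ), 0 < c → ∀ x ∈ K, c • x ∈ K) ∧
    IsClosed K ∧ (K ∩ (-K) ⊆ {0}) ∧ (interior K).Nonempty ∧
    (∀ x ∈ K, x ≠ 0 → A.mulVec x ∈ interior K) := by
  classical
  have hmi0 : m ⟨0, hk⟩ = 1 := hm0
  set i0 : Fin k := ⟨0, hk⟩ with hi0def
  let j0 : Fin (m i0) := ⟨0, by omega⟩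
  let q0 : (Σ i : Fin k, Fin (m i)) := ⟨i0, j0⟩
  haveI : Nonempty (Σ i : Fin k, Fin (m i)) := ⟨q0⟩
  let W : (Σ i : Fin k, Fin (m i)) → (Fin d → ℂ) := fun p => V p.1 p.2
  have hcardι : Fintype.card (Σ i : Fin k, Fin (m i)) = Module.finrank ℂ (Fin d → ℂ) := by
    simp [Fintype.card_sigma, hcard, Module.finrank_fin_fun]
  let B : Module.Basis (Σ i : Fin k, Fin (m i)) ℂ (Fin d → ℂ) :=
    basisOfLinearIndependentOfCardEqFinrank hbasis hcardι
  have hB : ∀ p, B p = W p := fun p => by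
    simp [B, W, coe_basisOfLinearIndependentOfCardEqFinrank]
  -- coercion map
  let cx : (Fin d → ℝ) → (Fin d → ℂ) := fun x t => (x t : ℂ)
  let L0 : (Fin d → ℝ) →ₗ[ℝ] (Fin d → ℂ) :=
    { toFun := cx
      map_add' := by intro x y; funext t; simp [cx]
      map_smul' := by intro c x; funext t; simp [cx, Complex.ofReal_mul, Complex.real_smul] }
  let L : (Fin d → ℝ) →ₗ[ℝ] ((Σ i : Fin k, Fin (m i)) → ℂ) :=
    ((B.equivFun.restrictScalars ℝ).toLinearMap) ∘ₗ L0
  have hLrepr : ∀ x p, L x p = B.repr (cx x) p := by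
    intro x p
    simp [L, L0, Module.Basis.equivFun_apply]
  have hLcont : Continuous L := L.continuous_of_finiteDimensional
  -- uniqueness of coordinates
  have huniq : ∀ (y : Fin d → ℂ) (c : (Σ i : Fin k, Fin (m i)) → ℂ),
      (y = ∑ p, c p • W p) → ∀ p, B.repr y p = c p := by
    intro y c hy p
    have h1 : y = ∑ p, c p • B p := by
      rw [hy]; exact Finset.sum_congr rfl fun p _ => by rw [hB]
    rw [h1]
    exact congrFun (B.repr_sum_self c) p
  -- sum conversion
  have hsum : ∀ (a : (i : Fin k) → Fin (m i) → ℂ) (t : Fin d),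
      (∑ p : Σ i : Fin k, Fin (m i), a p.1 p.2 • W p) t
        = ∑ i, ∑ j, a i j * V i j t := by
    intro a t
    rw [Finset.sum_apply, ← Finset.univ_sigma_univ, Finset.sum_sigma]
    simp [W, smul_eq_mul]
  -- conjugation machinery
  let τ : (Σ i : Fin k, Fin (m i)) → (Σ i : Fin k, Fin (m i)) :=
    fun p => ⟨σ p.1, Fin.cast (hσm p.1).symm p.2⟩
  have hτW : ∀ p t, W (τ p) t = starRingEnd ℂ (W p t) := by
    intro p t
    show V (σ p.1) (Fin.cast (hσm p.1).symm p.2) t = _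
    rw [hσV p.1 p.2]
  have hτinj : Function.Injective τ := by
    intro p q hpq
    have h2 : W p = W q := by
      funext t
      have h1 : W (τ p) t = W (τ q) t := by rw [hpq]
      rw [hτW, hτW] at h1
      exact (starRingEnd ℂ).injective h1
    exact hbasis.injective h2
  have hτbij : Function.Bijective τ := Finite.injective_iff_bijective.mp hτinj
  let e : (Σ i : Fin k, Fin (m i)) ≃ (Σ i : Fin k, Fin (m i)) := Equiv.ofBijective τ hτbij
  -- conjugate symmetry is automatic for real vectors
  have hconjauto : ∀ (x : Fin d → ℝ) (p : Σ i : Fin k, Fin (m i)),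
      B.repr (cx x) (τ p) = starRingEnd ℂ (B.repr (cx x) p) := by
    intro x p
    have hx : cx x = ∑ q, (B.repr (cx x)) q • W q := by
      conv_lhs => rw [← B.sum_repr (cx x)]
      exact Finset.sum_congr rfl fun q _ => by rw [hB]
    have hx2 : cx x = ∑ q, (starRingEnd ℂ ((B.repr (cx x)) (e.symm q))) • W q := by
      have step : cx x = ∑ q, (starRingEnd ℂ ((B.repr (cx x)) q)) • W (τ q) := by
        funext t
        have h1 : cx x t = starRingEnd ℂ (cx x t) := by simp [cx, Complex.conj_ofReal]
        calc cx x t = starRingEnd ℂ (cx x t) := h1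
          _ = starRingEnd ℂ ((∑ q, (B.repr (cx x)) q • W q) t) := by rw [← hx]
          _ = ∑ q, starRingEnd ℂ ((B.repr (cx x)) q) * starRingEnd ℂ (W q t) := by
              rw [Finset.sum_apply, map_sum]
              exact Finset.sum_congr rfl fun q _ => by simp [smul_eq_mul, map_mul]
          _ = ∑ q, (starRingEnd ℂ ((B.repr (cx x)) q)) • W (τ q) t := by
              exact Finset.sum_congr rfl fun q _ => by rw [hτW]; simp [smul_eq_mul]
          _ = (∑ q, (starRingEnd ℂ ((B.repr (cx x)) q)) • W (τ q)) t := by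
              rw [Finset.sum_apply]; rfl
      refine step.trans (Fintype.sum_equiv e _ _ (fun q => ?_))
      rw [e.symm_apply_apply]
      rfl
    have h4 := huniq (cx x)
      (fun q => starRingEnd ℂ ((B.repr (cx x)) (e.symm q))) hx2 (τ p)
    rw [h4]
    congr 1
    show (B.repr (cx x)) (e.symm (e p)) = _
    rw [e.symm_apply_apply]
  -- σ fixes i0
  have hσi0 : σ i0 = i0 := by
    by_contra h
    have h1 := hdom (σ i0) h
    rw [hσlam, hlam1] at h1
    simp only [Complex.conj_ofReal, Complex.norm_real, Real.norm_eq_abs] at h1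
    rw [abs_of_pos hlam1pos] at h1
    exact lt_irrefl _ h1
  have hq0uniq : ∀ p : Σ i : Fin k, Fin (m i), p.1 = i0 → p = q0 := by
    rintro ⟨pi, pj⟩ hp
    dsimp only at hp
    subst hp
    have h2 := pj.isLt
    have h3 : pj = j0 := by
      apply Fin.ext
      show (pj : ℕ) = 0
      omega
    show (⟨i0, pj⟩ : Σ i : Fin k, Fin (m i)) = ⟨i0, j0⟩
    rw [h3]
  have hτq0 : τ q0 = q0 := hq0uniq (τ q0) hσi0
  -- coordinate at q0 is real
  have hreal : ∀ x : Fin d → ℝ, (L x q0).im = 0 := by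
    intro x
    have := hconjauto x q0
    rw [hτq0] at this
    rw [hLrepr]
    have h2 : starRingEnd ℂ (B.repr (cx x) q0) = B.repr (cx x) q0 := this.symm
    exact (Complex.conj_eq_iff_im.mp h2)
  -- forward direction: membership gives coordinate bounds
  have hfwd : ∀ x : Fin d → ℝ,
      (∃ a : (i : Fin k) → Fin (m i) → ℂ,
        (∀ (i : Fin k) (j : Fin (m i)),
          a (σ i) (Fin.cast (hσm i).symm j) = (starRingEnd ℂ) (a i j)) ∧
        (∀ (i : Fin k) (j : Fin (m i)) (jz : Fin (m i0)),
          ‖a i j‖ ≤ (a i0 jz).re) ∧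
        (∀ t : Fin d, (x t : ℂ) = ∑ i : Fin k, ∑ j : Fin (m i), a i j * V i j t)) →
      ∀ p, ‖L x p‖ ≤ (L x q0).re := by
    intro x ⟨a, _hc, hineq, hrep⟩ p
    have heq : ∀ p : Σ i : Fin k, Fin (m i), L x p = a p.1 p.2 := by
      intro p
      rw [hLrepr]
      apply huniq
      funext t
      rw [hsum]
      exact hrep t
    rw [heq p, heq q0]
    exact hineq p.1 p.2 j0
  -- backward direction
  have hbwd : ∀ x : Fin d → ℝ,
      (∀ p, ‖L x p‖ ≤ (L x q0).re) →
      (∃ a : (i : Fin k) → Fin (m i) → ℂ,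
        (∀ (i : Fin k) (j : Fin (m i)),
          a (σ i) (Fin.cast (hσm i).symm j) = (starRingEnd ℂ) (a i j)) ∧
        (∀ (i : Fin k) (j : Fin (m i)) (jz : Fin (m i0)),
          ‖a i j‖ ≤ (a i0 jz).re) ∧
        (∀ t : Fin d, (x t : ℂ) = ∑ i : Fin k, ∑ j : Fin (m i), a i j * V i j t)) := by
    intro x hx
    refine ⟨fun i j => L x ⟨i, j⟩, ?_, ?_, ?_⟩
    · intro i j
      show L x ⟨σ i, Fin.cast (hσm i).symm j⟩ = starRingEnd ℂ (L x ⟨i, j⟩)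
      rw [hLrepr, hLrepr]
      exact hconjauto x ⟨i, j⟩
    · intro i j jz
      show ‖L x ⟨i, j⟩‖ ≤ (L x ⟨i0, jz⟩).re
      have h1 : (⟨i0, jz⟩ : Σ i : Fin k, Fin (m i)) = q0 := hq0uniq _ rfl
      rw [h1]
      exact hx ⟨i, j⟩
    · intro t
      have h1 : cx x = ∑ p, L x p • W p := by
        have := B.sum_repr (cx x)
        rw [← this]
        exact Finset.sum_congr rfl fun p _ => by rw [hB, hLrepr]
      have h2 := congrFun h1 t
      have h3 := hsum (fun i j => L x ⟨i, j⟩) t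
      calc (x t : ℂ) = cx x t := rfl
        _ = (∑ p, L x p • W p) t := h2
        _ = _ := h3
  -- x = 0 from vanishing coordinates
  have hzero : ∀ x : Fin d → ℝ, (∀ p, L x p = 0) → x = 0 := by
    intro x hx
    have h1 : B.repr (cx x) = 0 := by
      ext p
      rw [← hLrepr]
      exact hx p
    have h2 : cx x = 0 := (LinearEquiv.map_eq_zero_iff B.repr).mp h1
    funext t
    have h3 := congrFun h2 t
    exact Complex.ofReal_eq_zero.mp h3
  -- membership criterion
  have hmem : ∀ x : Fin d → ℝ, x ∈ K ↔ ∀ p, ‖L x p‖ ≤ (L x q0).re := by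
    intro x
    rw [hK]
    exact ⟨fun hx => hfwd x hx, fun hx => hbwd x hx⟩
  -- continuity facts
  have hcontq0 : Continuous fun z : Fin d → ℝ => (L z q0).re :=
    Complex.continuous_re.comp ((continuous_apply q0).comp hLcont)
  have hcontp : ∀ p, Continuous fun z : Fin d → ℝ => ‖L z p‖ :=
    fun p => continuous_norm.comp ((continuous_apply p).comp hLcont)
  -- the open set U inside K
  let U : Set (Fin d → ℝ) :=
    {z | 0 < (L z q0).re ∧ ∀ p, p ≠ q0 → ‖L z p‖ < (L z q0).re}
  have hUK : U ⊆ K := by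
    rintro z ⟨h1, h2⟩
    rw [hmem]
    intro p
    by_cases hp : p = q0
    · rw [hp]
      have hz0 : ((L z q0).re : ℂ) = L z q0 := by
        apply Complex.conj_eq_iff_re.mp
        rw [Complex.conj_eq_iff_im]
        exact hreal z
      rw [← hz0, Complex.norm_real, Real.norm_eq_abs, Complex.ofReal_re, abs_of_pos h1]
      
    · exact le_of_lt (h2 p hp)
  have hUopen : IsOpen U := by
    have hU2 : U = {z | 0 < (L z q0).re} ∩
        ⋂ p, {z | p ≠ q0 → ‖L z p‖ < (L z q0).re} := by
      ext z
      simp only [U, Set.mem_setOf_eq, Set.mem_inter_iff, Set.mem_iInter]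
    rw [hU2]
    refine (isOpen_lt continuous_const hcontq0).inter (isOpen_iInter_of_finite fun p => ?_)
    by_cases hp : p = q0
    · have : {z : Fin d → ℝ | p ≠ q0 → ‖L z p‖ < (L z q0).re} = Set.univ := by
        ext z; simp [hp]
      rw [this]; exact isOpen_univ
    · have : {z : Fin d → ℝ | p ≠ q0 → ‖L z p‖ < (L z q0).re} =
          {z : Fin d → ℝ | ‖L z p‖ < (L z q0).re} := by
        ext z; simp [hp]
      rw [this]
      exact isOpen_lt (hcontp p) hcontq0
  have hUsub : U ⊆ interior K := interior_maximal hUK hUopen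
  refine ⟨?_, ?_, ?_, ?_, ?_, ?_⟩
  · -- addition
    intro x hx y hy
    rw [hmem] at hx hy ⊢
    intro p
    rw [map_add]
    simp only [Pi.add_apply, Complex.add_re]
    calc ‖L x p + L y p‖ ≤ ‖L x p‖ + ‖L y p‖ :=
          norm_add_le _ _
      _ ≤ (L x q0).re + (L y q0).re := add_le_add (hx p) (hy p)
  · -- scaling
    intro c hc x hx
    rw [hmem] at hx ⊢
    intro p
    rw [map_smul]
    simp only [Pi.smul_apply, Complex.smul_re, smul_eq_mul]
    rw [Complex.real_smul, norm_mul, Complex.norm_real, Real.norm_eq_abs, abs_of_pos hc]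
    exact mul_le_mul_of_nonneg_left (hx p) (le_of_lt hc)
  · -- closed
    have hKeq : K = ⋂ p, {x : Fin d → ℝ | ‖L x p‖ ≤ (L x q0).re} := by
      ext x
      simp only [Set.mem_iInter, Set.mem_setOf_eq]
      exact hmem x
    rw [hKeq]
    exact isClosed_iInter fun p => isClosed_le (hcontp p) hcontq0
  · -- pointed
    rintro x ⟨hx1, hx2⟩
    rw [Set.mem_neg] at hx2
    rw [hmem] at hx1 hx2
    have hre0 : (L x q0).re = 0 := by
      have h1 := hx1 q0
      have h2 := hx2 q0
      rw [map_neg] at h2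
      simp only [Pi.neg_apply, map_neg_eq_map, norm_neg, Complex.neg_re] at h2
      have h3 := norm_nonneg (L x q0)
      linarith
    have hall : ∀ p, L x p = 0 := by
      intro p
      have := hx1 p
      rw [hre0] at this
      exact norm_eq_zero.mp (le_antisymm this (norm_nonneg _))
    exact hzero x hall
  · -- interior nonempty
    have hWq0 : ∀ t, starRingEnd ℂ (W q0 t) = W q0 t := by
      intro t
      have h1 := hτW q0 t
      rw [hτq0] at h1
      exact h1.symm
    have hcx₀ : cx (fun t => (W q0 t).re) = W q0 := by
      funext t
      exact Complex.conj_eq_iff_re.mp (hWq0 t)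
    have hLx₀ : ∀ p, L (fun t => (W q0 t).re) p = if p = q0 then 1 else 0 := by
      intro p
      rw [hLrepr]
      apply huniq
      rw [hcx₀]
      symm
      simp [ite_smul]
    refine ⟨fun t => (W q0 t).re, hUsub ⟨?_, ?_⟩⟩
    · rw [hLx₀ q0]
      simp
    · intro p hp
      rw [hLx₀ p, hLx₀ q0]
      simp [hp]
  · -- contraction
    intro x hxK hxne
    rw [hmem] at hxK
    have hpos0 : 0 ≤ (L x q0).re := le_trans (norm_nonneg _) (hxK q0)
    have hpos : 0 < (L x q0).re := by
      rcases hpos0.lt_or_eq with h | h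
      · exact h
      · exfalso
        apply hxne
        apply hzero
        intro p
        have h1 := hxK p
        rw [← h] at h1
        exact norm_eq_zero.mp (le_antisymm h1 (norm_nonneg _))
    -- coefficients of A.mulVec x
    set b : (Σ i : Fin k, Fin (m i)) → ℂ := fun p =>
      lam p.1 * L x p +
        (if h : (p.2 : ℕ) + 1 < m p.1 then (ε : ℂ) * L x ⟨p.1, ⟨(p.2 : ℕ) + 1, h⟩⟩ else 0)
      with hbdef
    have hAx : cx (A.mulVec x) = ∑ p, b p • W p := by
      have hA1 : cx (A.mulVec x) = (A.map Complex.ofReal).mulVec (cx x) := by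
        funext t
        show ((Matrix.mulVec A x t : ℝ) : ℂ) = _
        simp only [Matrix.mulVec, dotProduct, Matrix.map_apply]
        push_cast
        rfl
      have hx1 : cx x = ∑ p, L x p • W p := by
        conv_lhs => rw [← B.sum_repr (cx x)]
        exact Finset.sum_congr rfl fun p _ => by rw [hB, ← hLrepr]
      have hA2 : (A.map Complex.ofReal).mulVec (cx x)
          = ∑ p, L x p • (A.map Complex.ofReal).mulVec (W p) := by
        rw [hx1, ← Matrix.mulVecLin_apply, map_sum]
        exact Finset.sum_congr rfl fun p _ => by
          rw [map_smul, Matrix.mulVecLin_apply]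
      rw [hA1, hA2]
      have hsplit : ∀ p : Σ i : Fin k, Fin (m i),
          L x p • (A.map Complex.ofReal).mulVec (W p)
            = (lam p.1 * L x p) • W p +
              L x p • (if h : (p.2 : ℕ) = 0 then (0 : Fin d → ℂ)
                else (ε : ℂ) • W ⟨p.1, ⟨(p.2 : ℕ) - 1,
                  lt_of_le_of_lt (Nat.sub_le _ _) p.2.isLt⟩⟩) := by
        intro p
        have h1 : (A.map Complex.ofReal).mulVec (W p)
            = lam p.1 • W p +
              (if h : (p.2 : ℕ) = 0 then (0 : Fin d → ℂ)
                else (ε : ℂ) • W ⟨p.1, ⟨(p.2 : ℕ) - 1,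
                  lt_of_le_of_lt (Nat.sub_le _ _) p.2.isLt⟩⟩) := hAV p.1 p.2
        rw [h1, smul_add, smul_smul, mul_comm]
      rw [Finset.sum_congr rfl (fun p _ => hsplit p), Finset.sum_add_distrib]
      have hshift : (∑ p : Σ i : Fin k, Fin (m i),
            L x p • (if h : (p.2 : ℕ) = 0 then (0 : Fin d → ℂ)
              else (ε : ℂ) • W ⟨p.1, ⟨(p.2 : ℕ) - 1,
                lt_of_le_of_lt (Nat.sub_le _ _) p.2.isLt⟩⟩))
          = ∑ p : Σ i : Fin k, Fin (m i),
              (if h : (p.2 : ℕ) + 1 < m p.1 then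
                (ε : ℂ) * L x ⟨p.1, ⟨(p.2 : ℕ) + 1, h⟩⟩ else 0) • W p := by
        have lhs_eq : ∀ p : Σ i : Fin k, Fin (m i),
            L x p • (if h : (p.2 : ℕ) = 0 then (0 : Fin d → ℂ)
              else (ε : ℂ) • W ⟨p.1, ⟨(p.2 : ℕ) - 1,
                lt_of_le_of_lt (Nat.sub_le _ _) p.2.isLt⟩⟩)
            = if (p.2 : ℕ) ≠ 0 then ((ε : ℂ) * L x p) • W ⟨p.1, ⟨(p.2 : ℕ) - 1,
                lt_of_le_of_lt (Nat.sub_le _ _) p.2.isLt⟩⟩ else 0 := by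
          intro p
          by_cases h : (p.2 : ℕ) = 0
          · simp [h]
          · rw [dif_neg h, if_pos h, smul_smul, mul_comm]
        rw [Finset.sum_congr rfl (fun p _ => lhs_eq p)]
        rw [← Finset.sum_filter]
        have rhs_eq : ∀ p : Σ i : Fin k, Fin (m i),
            ((if h : (p.2 : ℕ) + 1 < m p.1 then
                (ε : ℂ) * L x ⟨p.1, ⟨(p.2 : ℕ) + 1, h⟩⟩ else 0) • W p)
            = if h : (p.2 : ℕ) + 1 < m p.1 then
                ((ε : ℂ) * L x ⟨p.1, ⟨(p.2 : ℕ) + 1, h⟩⟩) • W p else 0 := by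
          intro p
          by_cases h : (p.2 : ℕ) + 1 < m p.1
          · rw [dif_pos h, dif_pos h]
          · rw [dif_neg h, dif_neg h, zero_smul]
        rw [Finset.sum_congr rfl (fun p _ => rhs_eq p)]
        have rhs_eq2 : ∀ p : Σ i : Fin k, Fin (m i),
            (if h : (p.2 : ℕ) + 1 < m p.1 then
                ((ε : ℂ) * L x ⟨p.1, ⟨(p.2 : ℕ) + 1, h⟩⟩) • W p else 0)
            = if (p.2 : ℕ) + 1 < m p.1 then
                ((ε : ℂ) * L x (if h : (p.2 : ℕ) + 1 < m p.1 then
                  ⟨p.1, ⟨(p.2 : ℕ) + 1, h⟩⟩ else p)) • W p else 0 := by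
          intro p
          by_cases h : (p.2 : ℕ) + 1 < m p.1
          · rw [dif_pos h, if_pos h, dif_pos h]
          · rw [dif_neg h, if_neg h]
        rw [Finset.sum_congr rfl (fun p _ => rhs_eq2 p)]
        rw [← Finset.sum_filter]
        refine Finset.sum_nbij'
          (fun p => ⟨p.1, ⟨(p.2 : ℕ) - 1, lt_of_le_of_lt (Nat.sub_le _ _) p.2.isLt⟩⟩)
          (fun p => if h : (p.2 : ℕ) + 1 < m p.1 then ⟨p.1, ⟨(p.2 : ℕ) + 1, h⟩⟩ else p)
          ?_ ?_ ?_ ?_ ?_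
        · rintro ⟨pi, pj⟩ hp
          rw [Finset.mem_filter] at hp
          have hne : (pj : ℕ) ≠ 0 := hp.2
          rw [Finset.mem_filter]
          refine ⟨Finset.mem_univ _, ?_⟩
          show ((pj : ℕ) - 1) + 1 < m pi
          have := pj.isLt
          omega
        · rintro ⟨pi, pj⟩ hp
          rw [Finset.mem_filter] at hp
          have h : (pj : ℕ) + 1 < m pi := hp.2
          rw [Finset.mem_filter]
          refine ⟨Finset.mem_univ _, ?_⟩
          dsimp only
          rw [dif_pos h]
          simp
        · rintro ⟨pi, pj⟩ hp
          rw [Finset.mem_filter] at hp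
          have hne : (pj : ℕ) ≠ 0 := hp.2
          have hlt : ((pj : ℕ) - 1) + 1 < m pi := by
            have := pj.isLt
            omega
          dsimp only
          rw [dif_pos hlt]
          refine congrArg (Sigma.mk pi) (Fin.ext ?_)
          show ((pj : ℕ) - 1) + 1 = (pj : ℕ)
          omega
        · rintro ⟨pi, pj⟩ hp
          rw [Finset.mem_filter] at hp
          have h : (pj : ℕ) + 1 < m pi := hp.2
          dsimp only
          rw [dif_pos h]
          refine congrArg (Sigma.mk pi) (Fin.ext ?_)
          show ((pj : ℕ) + 1) - 1 = (pj : ℕ)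
          omega
        · rintro ⟨pi, pj⟩ hp
          rw [Finset.mem_filter] at hp
          have hne : (pj : ℕ) ≠ 0 := hp.2
          have hlt : ((pj : ℕ) - 1) + 1 < m pi := by
            have := pj.isLt
            omega
          dsimp only
          rw [dif_pos hlt]
          have hfin : (⟨((pj : ℕ) - 1) + 1, hlt⟩ : Fin (m pi)) = pj := by
            refine Fin.ext ?_
            show ((pj : ℕ) - 1) + 1 = (pj : ℕ)
            omega
          rw [hfin]
      rw [hshift, ← Finset.sum_add_distrib]
      exact Finset.sum_congr rfl fun p _ => by rw [← add_smul]
    have hbL : ∀ p, L (A.mulVec x) p = b p := by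
      intro p
      rw [hLrepr]
      exact huniq _ b hAx p
    have hbq0re : (b q0).re = lam1 * (L x q0).re := by
      have h1 : b q0 = (lam1 : ℂ) * L x q0 := by
        have h2 : ¬ ((q0.2 : ℕ) + 1 < m q0.1) := by
          show ¬ ((0 : ℕ) + 1 < m i0)
          omega
        simp only [hbdef]
        rw [dif_neg h2, add_zero]
        rw [show lam q0.1 = (lam1 : ℂ) from hlam1]
      rw [h1]
      simp [Complex.mul_re]
    apply hUsub
    constructor
    · rw [hbL q0, hbq0re]
      exact mul_pos hlam1pos hpos
    · intro p hp
      rw [hbL p, hbL q0, hbq0re]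
      have hpi : p.1 ≠ i0 := fun h => hp (hq0uniq p h)
      have h1 : ‖lam p.1 * L x p‖ ≤ ‖lam p.1‖ * (L x q0).re := by
        rw [norm_mul]
        exact mul_le_mul_of_nonneg_left (hxK p) (norm_nonneg _)
      have h2 : ‖if h : (p.2 : ℕ) + 1 < m p.1 then
            (ε : ℂ) * L x ⟨p.1, ⟨(p.2 : ℕ) + 1, h⟩⟩ else 0‖ ≤ ε * (L x q0).re := by
        by_cases h : (p.2 : ℕ) + 1 < m p.1
        · rw [dif_pos h, norm_mul, Complex.norm_real, Real.norm_eq_abs, abs_of_pos hε]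
          exact mul_le_mul_of_nonneg_left (hxK _) (le_of_lt hε)
        · rw [dif_neg h, norm_zero]
          positivity
      have h3 : ‖lam p.1‖ + ε < lam1 := by
        have := hε2 p.1 hpi
        linarith
      calc ‖b p‖
          ≤ ‖lam p.1 * L x p‖ + ‖if h : (p.2 : ℕ) + 1 < m p.1 then
              (ε : ℂ) * L x ⟨p.1, ⟨(p.2 : ℕ) + 1, h⟩⟩ else 0‖ := norm_add_le _ _
        _ ≤ ‖lam p.1‖ * (L x q0).re + ε * (L x q0).re := add_le_add h1 h2
        _ = (‖lam p.1‖ + ε) * (L x q0).re := by ring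
        _ < lam1 * (L x q0).re := by
            exact mul_lt_mul_of_pos_right h3 hpos
end

section
/- For s ≥ 2 and any complex number z ≠ 0, if m is the integer with mπ/s ≤ arg z ≤ (m+1)π/s, then the Minkowski functional of the regular 2s-gon P_s with vertices at the 2s-th roots of unity satisfies ‖z‖_{P_s} = Re( (1 + ω_s^{−1}) / (1 + cos(π/s)) · ω_s^{−m} · z ), where ω_s = exp(iπ/s). -/
open Complex Pointwise

set_option maxHeartbeats 1000000

private lemma sinsin_nonneg (n : ℕ) (hn : 0 < n) (j : ℤ) :
    0 ≤ Real.sin ((j : ℝ) * Real.pi / n) * Real.sin (((j : ℝ) - 1) * Real.pi / n) := by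
  have hn' : ((n : ℝ)) ≠ 0 := by positivity
  have hπ := Real.pi_pos
  set k : ℤ := j % (2 * n) with hk
  have h2n : (0:ℤ) < 2 * n := by positivity
  have hk0 : 0 ≤ k := Int.emod_nonneg j (ne_of_gt h2n)
  have hk1 : k < 2 * n := Int.emod_lt_of_pos j h2n
  have hjk : j = 2 * n * (j / (2 * n)) + k := by
    rw [hk]; exact (Int.mul_ediv_add_emod j (2*n)).symm
  set q : ℤ := j / (2 * n) with hq
  have e1 : (j : ℝ) * Real.pi / n = (k : ℝ) * Real.pi / n + q * (2 * Real.pi) := by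
    rw [hjk]; push_cast; field_simp; ring
  have e2 : ((j : ℝ) - 1) * Real.pi / n = ((k : ℝ) - 1) * Real.pi / n + q * (2 * Real.pi) := by
    rw [hjk]; push_cast; field_simp; ring
  rw [e1, e2, Real.sin_add_int_mul_two_pi, Real.sin_add_int_mul_two_pi]
  rcases eq_or_lt_of_le hk0 with h0 | h0
  · rw [← h0]; norm_num
  · rcases le_or_gt k n with hkn | hkn
    · apply mul_nonneg
      · apply Real.sin_nonneg_of_nonneg_of_le_pi
        · positivity
        · rw [div_le_iff₀ (by positivity)]
          have : (k:ℝ) ≤ n := by exact_mod_cast hkn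
          nlinarith
      · apply Real.sin_nonneg_of_nonneg_of_le_pi
        · have h1 : (1:ℝ) ≤ (k:ℝ) := by exact_mod_cast h0
          apply div_nonneg (by nlinarith) (by positivity)
        · rw [div_le_iff₀ (by positivity)]
          have : (k:ℝ) ≤ n := by exact_mod_cast hkn
          nlinarith
    · -- n < k < 2n : both factors nonpositive
      have hkR : (n:ℝ) < (k:ℝ) := by exact_mod_cast hkn
      have hkR2 : (k:ℝ) < 2*n := by exact_mod_cast hk1
      have hA : Real.sin ((k:ℝ) * Real.pi / n) ≤ 0 := by
        have h := Real.sin_sub_pi ((k:ℝ) * Real.pi / n)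
        have hs : 0 ≤ Real.sin ((k:ℝ) * Real.pi / n - Real.pi) := by
          apply Real.sin_nonneg_of_nonneg_of_le_pi
          · rw [sub_nonneg, le_div_iff₀ (by positivity)]; nlinarith
          · rw [sub_le_iff_le_add, div_le_iff₀ (by positivity)]; nlinarith
        nlinarith [h]
      have hB : Real.sin (((k:ℝ) - 1) * Real.pi / n) ≤ 0 := by
        have h := Real.sin_sub_pi (((k:ℝ) - 1) * Real.pi / n)
        have hs : 0 ≤ Real.sin (((k:ℝ)-1) * Real.pi / n - Real.pi) := by
          apply Real.sin_nonneg_of_nonneg_of_le_pi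
          · rw [sub_nonneg, le_div_iff₀ (by positivity)]
            have : (n:ℝ) ≤ (k:ℝ) - 1 := by
              have h1 : (n:ℤ) + 1 ≤ k := hkn
              have h2 : ((n:ℤ):ℝ) + 1 ≤ (k:ℝ) := by exact_mod_cast h1
              push_cast at h2 ⊢; linarith
            nlinarith
          · rw [sub_le_iff_le_add, div_le_iff₀ (by positivity)]; nlinarith
        nlinarith [h]
      nlinarith [mul_nonneg (neg_nonneg.2 hA) (neg_nonneg.2 hB)]

private lemma cos_bound (s : ℕ) (hs : 1 ≤ s) (j : ℤ) :
    Real.cos ((2 * (j : ℝ) - 1) * (Real.pi / s) / 2) ≤ Real.cos (Real.pi / s / 2) := by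
  have hs' : ((s : ℝ)) ≠ 0 := by positivity
  have h := Real.cos_sub_cos (Real.pi / s / 2) ((2 * (j : ℝ) - 1) * (Real.pi / s) / 2)
  have e1 : (Real.pi / s / 2 + (2 * (j : ℝ) - 1) * (Real.pi / s) / 2) / 2
      = (j : ℝ) * Real.pi / ((2 * s : ℕ) : ℝ) := by
    push_cast; field_simp; ring
  have e2 : (Real.pi / s / 2 - (2 * (j : ℝ) - 1) * (Real.pi / s) / 2) / 2
      = -(((j : ℝ) - 1) * Real.pi / ((2 * s : ℕ) : ℝ)) := by
    push_cast; field_simp; ring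
  rw [e1, e2, Real.sin_neg] at h
  have := sinsin_nonneg (2 * s) (by positivity) j
  nlinarith [this, h]


/-- Explicit formula for the Minkowski functional of the regular `2s`-gon on
the sector `mπ/s ≤ arg z ≤ (m+1)π/s`. -/
theorem stmt_19 (s : ℕ) (hs : 2 ≤ s) (z : ℂ) (hz : z ≠ 0) (m : ℤ)
    (hm1 : (m : ℝ) * Real.pi / s ≤ z.arg)
    (hm2 : z.arg ≤ ((m : ℝ) + 1) * Real.pi / s) :
    gauge (regularPolygon s) z =
      ((1 + (Complex.exp (Real.pi * Complex.I / s))⁻¹) /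
          (1 + (Real.cos (Real.pi / s) : ℂ)) *
        (Complex.exp (Real.pi * Complex.I / s)) ^ (-m) * z).re := by
  have hspos : (0:ℝ) < s := by positivity
  have hsne : ((s:ℝ)) ≠ 0 := ne_of_gt hspos
  have hπ := Real.pi_pos
  set θ : ℝ := Real.pi / s with hθdef
  have hθpos : 0 < θ := div_pos hπ hspos
  have hθle : θ ≤ Real.pi / 2 := by
    rw [hθdef, div_le_div_iff₀ hspos two_pos]
    have h2 : (2:ℝ) ≤ s := by exact_mod_cast hs
    nlinarith
  have hθpi : θ < Real.pi := by linarith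
  have hcoshalf : 0 < Real.cos (θ/2) := Real.cos_pos_of_mem_Ioo ⟨by linarith, by linarith⟩
  have hsinθ : 0 < Real.sin θ := Real.sin_pos_of_pos_of_lt_pi hθpos hθpi
  have hsinhalf : 0 < Real.sin (θ/2) := Real.sin_pos_of_pos_of_lt_pi (by linarith) (by linarith)
  have hcosθ0 : 0 ≤ Real.cos θ := Real.cos_nonneg_of_mem_Icc ⟨by linarith, hθle⟩
  set ω : ℂ := Complex.exp (↑Real.pi * Complex.I / ↑s) with hωdef
  have hωθ : ω = Complex.exp ((θ:ℂ) * Complex.I) := by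
    rw [hωdef]; congr 1; rw [hθdef]; push_cast; ring
  have hω0 : ω ≠ 0 := Complex.exp_ne_zero _
  have hωz : ∀ j : ℤ, ω ^ j = Complex.exp ((((j:ℝ) * θ : ℝ):ℂ) * Complex.I) := by
    intro j; rw [hωθ, ← Complex.exp_int_mul]; congr 1; push_cast; ring
  have hden : (1 + (Real.cos θ : ℂ)) ≠ 0 := by
    have h1 : ((1 + Real.cos θ : ℝ) : ℂ) ≠ 0 := Complex.ofReal_ne_zero.mpr (by linarith)
    rwa [Complex.ofReal_add, Complex.ofReal_one] at h1
  -- master evaluation lemma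
  have hEval : ∀ t ψ : ℝ, ((1 + ω⁻¹) / (1 + (Real.cos θ : ℂ)) * ω ^ (-m) *
      ((t:ℂ) * Complex.exp ((ψ:ℂ) * Complex.I))).re
      = t * Real.cos (ψ - (m:ℝ) * θ - θ/2) / Real.cos (θ/2) := by
    intro t ψ
    have hinv : ω⁻¹ = Complex.exp (((-θ : ℝ):ℂ) * Complex.I) := by
      rw [hωθ, ← Complex.exp_neg]; congr 1; push_cast; ring
    have h1 : Complex.exp (((((-m:ℤ):ℝ) * θ : ℝ):ℂ) * Complex.I) *
        Complex.exp ((ψ:ℂ) * Complex.I)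
        = Complex.exp (((ψ - (m:ℝ)*θ : ℝ):ℂ) * Complex.I) := by
      rw [← Complex.exp_add]; congr 1; push_cast; ring
    have h2 : Complex.exp (((-θ:ℝ):ℂ) * Complex.I) *
        Complex.exp (((ψ - (m:ℝ)*θ : ℝ):ℂ) * Complex.I)
        = Complex.exp (((ψ - (m:ℝ)*θ - θ : ℝ):ℂ) * Complex.I) := by
      rw [← Complex.exp_add]; congr 1; push_cast; ring
    have hC : (1 + ω⁻¹) / (1 + (Real.cos θ : ℂ)) * ω ^ (-m) *
        ((t:ℂ) * Complex.exp ((ψ:ℂ) * Complex.I))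
        = ((t:ℂ) * (Complex.exp (((ψ - (m:ℝ)*θ : ℝ):ℂ) * Complex.I)
            + Complex.exp (((ψ - (m:ℝ)*θ - θ : ℝ):ℂ) * Complex.I)))
          / (1 + (Real.cos θ : ℂ)) := by
      rw [hinv, hωz (-m)]
      rw [div_mul_eq_mul_div, div_mul_eq_mul_div, div_eq_div_iff hden hden]
      linear_combination ((1 + (Real.cos θ : ℂ)) * (t:ℂ)) * h1
        + ((1 + (Real.cos θ : ℂ)) * (t:ℂ) * Complex.exp (((-θ:ℝ):ℂ) * Complex.I)) * h1
        + ((1 + (Real.cos θ : ℂ)) * (t:ℂ)) * h2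
    rw [hC]
    rw [show (1 + (Real.cos θ:ℂ)) = ((1 + Real.cos θ : ℝ):ℂ) by
      rw [Complex.ofReal_add, Complex.ofReal_one]]
    rw [Complex.div_ofReal_re, Complex.re_ofReal_mul, Complex.add_re,
      Complex.exp_ofReal_mul_I_re, Complex.exp_ofReal_mul_I_re]
    have hcc : Real.cos (ψ - (m:ℝ)*θ) + Real.cos (ψ - (m:ℝ)*θ - θ)
        = 2 * Real.cos (ψ - (m:ℝ)*θ - θ/2) * Real.cos (θ/2) := by
      rw [Real.cos_add_cos]
      rw [show (ψ - (m:ℝ)*θ + (ψ - (m:ℝ)*θ - θ))/2 = ψ - (m:ℝ)*θ - θ/2 by ring]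
      rw [show (ψ - (m:ℝ)*θ - (ψ - (m:ℝ)*θ - θ))/2 = θ/2 by ring]
    have hd2 : 1 + Real.cos θ = 2 * Real.cos (θ/2)^2 := by
      have h := Real.cos_two_mul (θ/2)
      rw [show 2*(θ/2) = θ by ring] at h
      linarith
    rw [hcc, hd2]
    field_simp
  -- write z in polar form
  have hzeq : ((‖z‖ : ℝ):ℂ) * Complex.exp ((z.arg : ℂ) * Complex.I) = z :=
    Complex.norm_mul_exp_arg_mul_I z
  set ρ : ℝ := ‖z‖ with hρdef
  set φ : ℝ := z.arg with hφdef
  have hρpos : 0 < ρ := by rw [hρdef]; exact norm_pos_iff.mpr hz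
  have hm1' : (m:ℝ) * θ ≤ φ := by
    rw [hθdef]; have : (m:ℝ) * (Real.pi / s) = (m:ℝ) * Real.pi / s := by ring
    rw [this]; exact hm1
  have hm2' : φ ≤ ((m:ℝ) + 1) * θ := by
    rw [hθdef]; have : ((m:ℝ)+1) * (Real.pi / s) = ((m:ℝ)+1) * Real.pi / s := by ring
    rw [this]; exact hm2
  set ψ₀ : ℝ := φ - (m:ℝ) * θ with hψdef
  have hψ0 : 0 ≤ ψ₀ := by rw [hψdef]; linarith
  have hψθ : ψ₀ ≤ θ := by rw [hψdef]; nlinarith [hm2']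
  -- the value of the functional at z
  have hℓz : ((1 + ω⁻¹) / (1 + (Real.cos θ : ℂ)) * ω ^ (-m) * z).re
      = ρ * Real.cos (ψ₀ - θ/2) / Real.cos (θ/2) := by
    conv_lhs => rw [← hzeq]
    rw [hEval ρ φ]
  rw [hℓz]
  set r : ℝ := ρ * Real.cos (ψ₀ - θ/2) / Real.cos (θ/2) with hrdef
  have hcosψ : Real.cos (θ/2) ≤ Real.cos (ψ₀ - θ/2) := by
    rw [← Real.cos_abs (ψ₀ - θ/2)]
    apply Real.cos_le_cos_of_nonneg_of_le_pi (abs_nonneg _) (by linarith)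
    rw [abs_le]; constructor <;> linarith
  have hrpos : 0 < r := by
    rw [hrdef]; apply div_pos (mul_pos hρpos (lt_of_lt_of_le hcoshalf hcosψ)) hcoshalf
  -- vertices
  have hvertmem : ∀ k : ℤ, ω ^ k ∈
      {w : ℂ | ∃ i : Fin (2 * s), w = Complex.exp (↑Real.pi * Complex.I * ↑↑i / ↑s)} := by
    intro k
    have h2s : (0:ℤ) < 2 * (s:ℤ) := by positivity
    have hknn : 0 ≤ k % (2 * (s:ℤ)) := Int.emod_nonneg k (ne_of_gt h2s)
    have hklt : k % (2 * (s:ℤ)) < 2 * (s:ℤ) := Int.emod_lt_of_pos k h2s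
    refine ⟨⟨(k % (2 * (s:ℤ))).toNat, by omega⟩, ?_⟩
    have hi : (((k % (2 * (s:ℤ))).toNat : ℤ)) = k % (2 * (s:ℤ)) := Int.toNat_of_nonneg hknn
    have hω2s : ω ^ ((2 * (s:ℤ))) = 1 := by
      rw [hωz]
      rw [show (((2 * (s:ℤ) : ℤ):ℝ) * θ : ℝ) = 2 * Real.pi by
        rw [hθdef]; push_cast; field_simp]
      rw [show ((2 * Real.pi : ℝ):ℂ) * Complex.I = 2 * (Real.pi:ℂ) * Complex.I by
        push_cast; ring]
      exact Complex.exp_two_pi_mul_I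
    have hperiod : ω ^ k = ω ^ (k % (2 * (s:ℤ))) := by
      conv_lhs => rw [show k = 2 * (s:ℤ) * (k / (2 * (s:ℤ))) + k % (2 * (s:ℤ)) from
        (Int.mul_ediv_add_emod k (2 * (s:ℤ))).symm]
      rw [zpow_add₀ hω0, zpow_mul, hω2s, one_zpow, one_mul]
    rw [hperiod, hωz]
    congr 1
    simp only [Fin.val_mk]
    rw [show ((((k % (2 * (s:ℤ))).toNat : ℕ)) : ℂ) = ((k % (2 * (s:ℤ)) : ℤ) : ℂ) from by
      exact_mod_cast congrArg (fun x : ℤ => (x : ℂ)) hi]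
    rw [hθdef]
    push_cast
    field_simp
  -- functional ≤ 1 on the polygon
  have hHalf : ∀ w ∈ regularPolygon s,
      ((1 + ω⁻¹) / (1 + (Real.cos θ : ℂ)) * ω ^ (-m) * w).re ≤ 1 := by
    have hlin : IsLinearMap ℝ (fun w : ℂ =>
        ((1 + ω⁻¹) / (1 + (Real.cos θ : ℂ)) * ω ^ (-m) * w).re) := by
      constructor
      · intro x y; simp [mul_add]
      · intro c x
        simp only [smul_eq_mul]
        rw [mul_smul_comm, Complex.real_smul, Complex.re_ofReal_mul]
    have hsub : {w : ℂ | ∃ i : Fin (2 * s), w = Complex.exp (↑Real.pi * Complex.I * ↑↑i / ↑s)}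
        ⊆ {w : ℂ | ((1 + ω⁻¹) / (1 + (Real.cos θ : ℂ)) * ω ^ (-m) * w).re ≤ 1} := by
      rintro w ⟨i, rfl⟩
      have hwi : Complex.exp (↑Real.pi * Complex.I * ↑↑i / ↑s)
          = ((1:ℝ):ℂ) * Complex.exp (((((i:ℕ):ℝ) * θ : ℝ):ℂ) * Complex.I) := by
        rw [Complex.ofReal_one, one_mul]
        congr 1
        rw [hθdef]; push_cast; field_simp
      show ((1 + ω⁻¹) / (1 + (Real.cos θ : ℂ)) * ω ^ (-m) *
        Complex.exp (↑Real.pi * Complex.I * ↑↑i / ↑s)).re ≤ 1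
      rw [hwi, hEval 1 (((i:ℕ):ℝ) * θ), one_mul, div_le_one hcoshalf]
      have hcb := cos_bound s (le_trans one_le_two hs) ((i:ℕ) - m)
      rw [← hθdef] at hcb
      rw [show (((i:ℕ):ℝ) * θ - (m:ℝ) * θ - θ/2 : ℝ)
          = (2 * ((((i:ℕ) - m : ℤ)):ℝ) - 1) * θ / 2 by push_cast; ring]
      exact hcb
    intro w hw
    exact convexHull_min hsub (convex_halfSpace_le hlin 1) hw
  -- the convex combination
  set a : ℝ := ρ * Real.sin (θ - ψ₀) / (r * Real.sin θ) with hadef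
  set b : ℝ := ρ * Real.sin ψ₀ / (r * Real.sin θ) with hbdef
  have hsψ : 0 ≤ Real.sin ψ₀ := Real.sin_nonneg_of_nonneg_of_le_pi hψ0 (by linarith)
  have hsθψ : 0 ≤ Real.sin (θ - ψ₀) :=
    Real.sin_nonneg_of_nonneg_of_le_pi (by linarith) (by linarith)
  have ha : 0 ≤ a := by rw [hadef]; positivity
  have hb : 0 ≤ b := by rw [hbdef]; positivity
  have hab : a + b = 1 := by
    rw [hadef, hbdef, ← add_div,
      div_eq_one_iff_eq (ne_of_gt (mul_pos hrpos hsinθ))]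
    rw [hrdef]
    have hs2 : Real.sin θ = 2 * Real.sin (θ/2) * Real.cos (θ/2) := by
      have h := Real.sin_two_mul (θ/2); rw [show 2*(θ/2) = θ by ring] at h; linarith
    have hc2 : Real.cos θ = 2 * Real.cos (θ/2)^2 - 1 := by
      have h := Real.cos_two_mul (θ/2); rw [show 2*(θ/2) = θ by ring] at h; linarith
    rw [Real.sin_sub θ ψ₀, Real.cos_sub ψ₀ (θ/2), hs2, hc2]
    field_simp
    linear_combination (-(2*Real.sin ψ₀)) * Real.sin_sq_add_cos_sq (θ/2)
  have hwP : a • (ω ^ (m:ℤ)) + b • (ω ^ (m+1 : ℤ)) ∈ regularPolygon s := by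
    exact (convex_convexHull ℝ _) (subset_convexHull ℝ _ (hvertmem m))
      (subset_convexHull ℝ _ (hvertmem (m+1))) ha hb hab
  have hzr : r • (a • (ω ^ (m:ℤ)) + b • (ω ^ (m+1 : ℤ))) = z := by
    rw [hωz m, hωz (m+1), ← hzeq]
    rw [Complex.real_smul, Complex.real_smul, Complex.real_smul]
    have hsubexp : Real.sin (θ - ψ₀) = Real.sin θ * Real.cos ψ₀ - Real.cos θ * Real.sin ψ₀ :=
      Real.sin_sub θ ψ₀
    apply Complex.ext
    · simp only [Complex.add_re, Complex.re_ofReal_mul, Complex.exp_ofReal_mul_I_re]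
      rw [show φ = ψ₀ + (m:ℝ)*θ by rw [hψdef]; ring]
      rw [show (((m+1:ℤ)):ℝ)*θ = (m:ℝ)*θ + θ by push_cast; ring]
      rw [Real.cos_add ψ₀ ((m:ℝ)*θ), Real.cos_add ((m:ℝ)*θ) θ]
      rw [hadef, hbdef, hsubexp]
      field_simp
      ring
    · simp only [Complex.add_im, Complex.im_ofReal_mul, Complex.exp_ofReal_mul_I_im]
      rw [show φ = ψ₀ + (m:ℝ)*θ by rw [hψdef]; ring]
      rw [show (((m+1:ℤ)):ℝ)*θ = (m:ℝ)*θ + θ by push_cast; ring]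
      rw [Real.sin_add ψ₀ ((m:ℝ)*θ), Real.sin_add ((m:ℝ)*θ) θ]
      rw [hadef, hbdef, hsubexp]
      field_simp
      ring
  have hzmem : z ∈ r • regularPolygon s := by
    rw [← hzr]; exact Set.smul_mem_smul_set hwP
  refine le_antisymm (gauge_le_of_mem hrpos.le hzmem) ?_
  rw [gauge_def]
  refine le_csInf ⟨r, Set.mem_sep hrpos hzmem⟩ ?_
  rintro t ⟨ht0, htz⟩
  obtain ⟨w, hwmem, hzw⟩ := Set.mem_smul_set.mp htz
  have h2 : ((1 + ω⁻¹) / (1 + (Real.cos θ : ℂ)) * ω ^ (-m) * z).re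
      = t * ((1 + ω⁻¹) / (1 + (Real.cos θ : ℂ)) * ω ^ (-m) * w).re := by
    rw [← hzw, mul_smul_comm, Complex.real_smul, Complex.re_ofReal_mul]
  rw [hℓz] at h2
  have h3 := hHalf w hwmem
  have ht0' : (0:ℝ) < t := ht0
  calc r = t * ((1 + ω⁻¹) / (1 + (Real.cos θ : ℂ)) * ω ^ (-m) * w).re := h2
    _ ≤ t * 1 := by nlinarith
    _ = t := mul_one t
end
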